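/- arXiv:2007.08293 — 8 statements merged into one kernel-verified Lean document; each statement's English description precedes it below -/
import Mathlib

section
/- Let d, D ∈ ℝ with d ≤ D and let Q ∈ ℝ_{>0}. Let (S_t)_{t∈ℕ} be a real-valued stochastic process adapted to a filtration (F_t)_{t∈ℕ} and let T be a stopping time with respect to (F_t) that is almost surely finite. Assume that for all t ∈ ℕ: (i) S_{min{t,T}} ∈ [d, D] almost surely; (ii) E[S_{t+1} | F_t]·1{t < T} ≤ S_t·1{t < T}; and (iii) E[(S_{t+1} − S_t)² | F_t]·1{t < T} ≥ Q·1{t < T}. Then E[T | F_0] ≤ (E[(D − S_T)² | F_0] − (D − S_0)²)/Q. -/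
open MeasureTheory Filter

/-- (Greenberg et al., corrected optional-stopping bound.)
If `S` is adapted to the filtration `F`, the stopped process stays in `[d, D]`,
`S` is a supermartingale before the stopping time `T`, and the conditional second
moment of the increments is at least `Q` before `T`, then
`E[T | F 0] ≤ (E[(D − S_T)² | F 0] − (D − S_0)²)/Q` almost surely. -/
theorem expected_stopping_time_bound
    {Ω : Type*} {mΩ : MeasurableSpace Ω} {μ : Measure Ω} [IsProbabilityMeasure μ]
    (F : Filtration ℕ mΩ) (S : ℕ → Ω → ℝ) (T : Ω → ℕ)
    (d D Q : ℝ) (hdD : d ≤ D) (hQ : 0 < Q)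
    (hadapted : Adapted F S)
    (hSint : ∀ t : ℕ, Integrable (S t) μ)
    (hSqint : ∀ t : ℕ, Integrable (fun ω => (S (t + 1) ω - S t ω) ^ 2) μ)
    (hT : IsStoppingTime F (fun ω => (T ω : WithTop ℕ)))
    (hbdd : ∀ t : ℕ, ∀ᵐ ω ∂μ, S (min t (T ω)) ω ∈ Set.Icc d D)
    (hsuper : ∀ t : ℕ, ∀ᵐ ω ∂μ,
      (μ[S (t + 1) | F t]) ω * (if t < T ω then (1 : ℝ) else 0)
        ≤ S t ω * (if t < T ω then (1 : ℝ) else 0))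
    (hvar : ∀ t : ℕ, ∀ᵐ ω ∂μ,
      Q * (if t < T ω then (1 : ℝ) else 0)
        ≤ (μ[fun ω' => (S (t + 1) ω' - S t ω') ^ 2 | F t]) ω
            * (if t < T ω then (1 : ℝ) else 0)) :
    ∀ᵐ ω ∂μ,
      (μ[fun ω' => (T ω' : ℝ) | F 0]) ω
        ≤ ((μ[fun ω' => (D - S (T ω') ω') ^ 2 | F 0]) ω - (D - S 0 ω) ^ 2) / Q := by
  classical
  have hle : ∀ t, (F t : MeasurableSpace Ω) ≤ mΩ := F.le
  have hprog : IsStronglyProgressive F S := hadapted.stronglyAdapted.isStronglyProgressive_of_discrete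
  have hst : ∀ t : ℕ, IsStoppingTime F (fun ω => ((min t (T ω) : ℕ) : WithTop ℕ)) := fun t => by
    have heq : (fun ω => ((min t (T ω) : ℕ) : WithTop ℕ))
        = fun ω => min (t : WithTop ℕ) ((T ω : WithTop ℕ)) := by
      funext ω
      rcases le_total t (T ω) with h | h
      · rw [min_eq_left h, min_eq_left (by exact_mod_cast h)]
      · rw [min_eq_right h, min_eq_right (by exact_mod_cast h)]
    rw [heq]; exact (isStoppingTime_const F t).min hT
  -- measurability of the stopped process and stopped time
  have hXm : ∀ t : ℕ, StronglyMeasurable[F t] (fun ω => S (min t (T ω)) ω) := fun t =>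
    stronglyMeasurable_stoppedValue_of_le hprog (hst t) fun ω => WithTop.coe_le_coe.mpr (min_le_left _ _)
  have hNm : ∀ t : ℕ, StronglyMeasurable[F t] (fun ω => ((min t (T ω) : ℕ) : ℝ)) := fun t =>
    stronglyMeasurable_stoppedValue_of_le
      (StronglyAdapted.isStronglyProgressive_of_discrete (fun s => (stronglyMeasurable_const :
        StronglyMeasurable[F s] (fun _ : Ω => (s : ℝ))))) (hst t)
        fun ω => WithTop.coe_le_coe.mpr (min_le_left _ _)
  have hTmeas : Measurable T := by
    refine measurable_to_countable' fun n => hle n _ ?_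
    have h : T ⁻¹' {n} = {ω | ((T ω : WithTop ℕ)) = (n : WithTop ℕ)} := by
      ext ω; simp
    rw [h]; exact hT.measurableSet_eq n
  have hTR_meas : Measurable fun ω => (T ω : ℝ) :=
    (measurable_from_top (f := fun n : ℕ => (n : ℝ))).comp hTmeas
  have hWm : Measurable fun ω => S (T ω) ω :=
    (measurable_stoppedValue hprog hT).mono hT.measurableSpace_le le_rfl
  -- a.e. bounds
  have hbdd' : ∀ᵐ ω ∂μ, ∀ t : ℕ, S (min t (T ω)) ω ∈ Set.Icc d D := ae_all_iff.mpr hbdd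
  have hTbdd : ∀ᵐ ω ∂μ, S (T ω) ω ∈ Set.Icc d D := by
    filter_upwards [hbdd'] with ω h
    simpa using h (T ω)
  -- integrability of the stopped squared process
  have habs : ∀ x : ℝ, x ∈ Set.Icc d D → ‖(D - x) ^ 2‖ ≤ (D - d) ^ 2 := by
    intro x hx
    rw [Real.norm_eq_abs, abs_of_nonneg (sq_nonneg _)]
    have h1 : 0 ≤ D - x := by linarith [hx.2]
    have h2 : D - x ≤ D - d := by linarith [hx.1]
    nlinarith
  have hX2int : ∀ t : ℕ, Integrable (fun ω => (D - S (min t (T ω)) ω) ^ 2) μ := by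
    intro t
    refine Integrable.mono' (integrable_const ((D - d) ^ 2))
      (((stronglyMeasurable_const.sub (hXm t)).pow 2).mono (hle t)).aestronglyMeasurable ?_
    filter_upwards [hbdd t] with ω h using habs _ h
  have hWint : Integrable (fun ω => (D - S (T ω) ω) ^ 2) μ := by
    refine Integrable.mono' (integrable_const ((D - d) ^ 2))
      ((measurable_const.sub hWm).pow_const 2).aestronglyMeasurable ?_
    filter_upwards [hTbdd] with ω h using habs _ h
  have hNint : ∀ t : ℕ, Integrable (fun ω => ((min t (T ω) : ℕ) : ℝ)) μ := by
    intro t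
    refine Integrable.mono' (integrable_const (t : ℝ))
      ((hNm t).mono (hle t)).aestronglyMeasurable (ae_of_all _ fun ω => ?_)
    rw [Real.norm_eq_abs, abs_of_nonneg (by positivity)]
    exact_mod_cast min_le_left t (T ω)
  -- the supermartingale-like process
  set M : ℕ → Ω → ℝ :=
    fun t ω => (D - S (min t (T ω)) ω) ^ 2 - Q * ((min t (T ω) : ℕ) : ℝ) with hM_def
  have hMmeas : ∀ t : ℕ, StronglyMeasurable[F t] (M t) := fun t =>
    ((stronglyMeasurable_const.sub (hXm t)).pow 2).sub (stronglyMeasurable_const.mul (hNm t))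
  have hMint : ∀ t : ℕ, Integrable (M t) μ := fun t =>
    (hX2int t).sub ((hNint t).const_mul Q)
  -- Key one-step submartingale property
  have key : ∀ t : ℕ, M t ≤ᵐ[μ] μ[M (t + 1)|F t] := by
    intro t
    set A : Set Ω := {ω | t < T ω} with hA_def
    have hA : MeasurableSet[F t] A := by
      have h : MeasurableSet[F t] {ω | ((T ω : WithTop ℕ)) ≤ (t : WithTop ℕ)}ᶜ := (hT t).compl
      have : {ω | ((T ω : WithTop ℕ)) ≤ (t : WithTop ℕ)}ᶜ = A := by
        ext ω; simp [hA_def, not_le]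
      rwa [this] at h
    -- the truncated "D - S t" factor
    set g : Ω → ℝ := A.indicator (fun ω => max 0 (min (D - S t ω) (D - d))) with hg_def
    have hg_meas : StronglyMeasurable[F t] g := by
      apply Measurable.stronglyMeasurable
      exact (measurable_const.max
        ((measurable_const.sub (hadapted t)).min measurable_const)).indicator hA
    have hg_nonneg : ∀ ω, 0 ≤ g ω := by
      intro ω
      by_cases h : ω ∈ A
      · rw [hg_def, Set.indicator_of_mem h]; exact le_max_left _ _
      · rw [hg_def, Set.indicator_of_notMem h]
    have hg_bdd : ∀ ω, ‖g ω‖ ≤ max (D - d) 0 := by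
      intro ω
      rw [Real.norm_eq_abs, abs_of_nonneg (hg_nonneg ω)]
      by_cases h : ω ∈ A
      · rw [hg_def, Set.indicator_of_mem h]
        exact max_le (le_max_right _ _) (le_trans (min_le_right _ _) (le_max_left _ _))
      · rw [hg_def, Set.indicator_of_notMem h]; exact le_max_right _ _
    have hg_eq : ∀ᵐ ω ∂μ, ω ∈ A → g ω = D - S t ω := by
      filter_upwards [hbdd t] with ω hb h
      have hmin : min t (T ω) = t := min_eq_left (le_of_lt h)
      rw [hmin] at hb
      rw [hg_def, Set.indicator_of_mem h, min_eq_left (by linarith [hb.1]),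
        max_eq_right (by linarith [hb.2])]
    set δ : Ω → ℝ := fun ω => S t ω - S (t + 1) ω with hδ_def
    have hδint : Integrable δ μ := (hSint t).sub (hSint (t + 1))
    have hgδint : Integrable (fun ω => g ω * δ ω) μ :=
      hδint.bdd_mul (hg_meas.mono (hle t)).aestronglyMeasurable (ae_of_all _ hg_bdd)
    have hpull : μ[fun ω => g ω * δ ω|F t] =ᵐ[μ] fun ω => g ω * (μ[δ|F t]) ω := by
      have := condExp_mul_of_stronglyMeasurable_left (μ := μ) hg_meas hgδint hδint
      exact this
    have hδce : μ[δ|F t] =ᵐ[μ] fun ω => S t ω - (μ[S (t + 1)|F t]) ω := by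
      have h1 := condExp_sub (μ := μ) (m := F t) (hSint t) (hSint (t + 1))
      have h2 : μ[S t|F t] = S t :=
        condExp_of_stronglyMeasurable (hle t) (hadapted.stronglyAdapted t) (hSint t)
      have hde : δ = S t - S (t + 1) := rfl
      rw [hde]
      filter_upwards [h1] with ω hω
      rw [hω, Pi.sub_apply, h2]
    have hpos : 0 ≤ᵐ[μ] μ[fun ω => g ω * δ ω|F t] := by
      filter_upwards [hpull, hδce, hsuper t] with ω h1 h2 h3
      rw [h1]
      by_cases h : t < T ω
      · have : (μ[δ|F t]) ω = S t ω - (μ[S (t + 1)|F t]) ω := h2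
        rw [this]
        refine mul_nonneg (hg_nonneg ω) ?_
        simp only [if_pos h, mul_one] at h3
        linarith
      · have hnA : ω ∉ A := h
        have : g ω = 0 := Set.indicator_of_notMem hnA _
        rw [this, zero_mul]
        simp
    -- the quadratic term
    set f1 : Ω → ℝ := A.indicator (fun ω => (S (t + 1) ω - S t ω) ^ 2) with hf1_def
    have hf1int : Integrable f1 μ := (hSqint t).indicator (hle t _ hA)
    have hf1ce : A.indicator (fun _ => Q) ≤ᵐ[μ] μ[f1|F t] := by
      have h1 := condExp_indicator (μ := μ) (hSqint t) hA
      filter_upwards [h1, hvar t] with ω hω h2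
      rw [hf1_def, hω]
      by_cases h : ω ∈ A
      · rw [Set.indicator_of_mem h, Set.indicator_of_mem h]
        have ht' : t < T ω := h
        simp only [if_pos ht', mul_one] at h2
        exact h2
      · rw [Set.indicator_of_notMem h, Set.indicator_of_notMem h]
    set f3 : Ω → ℝ := A.indicator (fun _ => (1 : ℝ)) with hf3_def
    have hf3meas : StronglyMeasurable[F t] f3 := stronglyMeasurable_const.indicator hA
    have hf3int : Integrable f3 μ := (integrable_const 1).indicator (hle t _ hA)
    -- decomposition of the increment
    set Δ : Ω → ℝ := fun ω => f1 ω + 2 * (g ω * δ ω) - Q * f3 ω with hΔ_def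
    have hΔint : Integrable Δ μ := (hf1int.add (hgδint.const_mul 2)).sub (hf3int.const_mul Q)
    have hMid : M (t + 1) =ᵐ[μ] fun ω => M t ω + Δ ω := by
      filter_upwards [hbdd t, hg_eq] with ω hb hge
      by_cases h : ω ∈ A
      · have ht' : t < T ω := h
        have ht1 : min t (T ω) = t := min_eq_left (le_of_lt ht')
        have ht2 : min (t + 1) (T ω) = t + 1 := min_eq_left ht'
        have hgω : g ω = D - S t ω := hge h
        simp only [hM_def, hΔ_def, hf1_def, hf3_def, hδ_def, Set.indicator_of_mem h,
          ht1, ht2, hgω]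
        push_cast
        ring
      · have hT' : T ω ≤ t := not_lt.mp h
        have ht1 : min t (T ω) = T ω := min_eq_right hT'
        have ht2 : min (t + 1) (T ω) = T ω := min_eq_right (hT'.trans (Nat.le_succ t))
        have hgω : g ω = 0 := Set.indicator_of_notMem h _
        have hf1ω : f1 ω = 0 := Set.indicator_of_notMem h _
        have hf3ω : f3 ω = 0 := Set.indicator_of_notMem h _

        simp only [hM_def, hΔ_def, ht1, ht2, hgω, hf1ω, hf3ω]
        ring
    have hce1 : μ[M (t + 1)|F t] =ᵐ[μ] fun ω => (μ[M t|F t]) ω + (μ[Δ|F t]) ω := by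
      have h1 := condExp_congr_ae (m := F t) hMid
      have h2 := condExp_add (μ := μ) (m := F t) (hMint t) hΔint
      filter_upwards [h1, h2] with ω hω1 hω2
      rw [hω1]
      exact hω2
    have hceMt : μ[M t|F t] = M t :=
      condExp_of_stronglyMeasurable (hle t) (hMmeas t) (hMint t)
    have hceΔ : μ[Δ|F t] =ᵐ[μ]
        fun ω => (μ[f1|F t]) ω + 2 * (μ[fun ω => g ω * δ ω|F t]) ω - Q * f3 ω := by
      have hmul2 : μ[fun ω => 2 * (g ω * δ ω)|F t] =ᵐ[μ]
          fun ω => 2 * (μ[fun ω => g ω * δ ω|F t]) ω := by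
        have := condExp_smul (μ := μ) (m := F t) (2 : ℝ) (fun ω => g ω * δ ω)
        simpa [smul_eq_mul, Pi.smul_def] using this
      have hQf3 : μ[fun ω => Q * f3 ω|F t] = fun ω => Q * f3 ω :=
        condExp_of_stronglyMeasurable (hle t) (stronglyMeasurable_const.mul hf3meas)
          (hf3int.const_mul Q)
      have h1 := condExp_sub (μ := μ) (m := F t)
        (hf1int.add (hgδint.const_mul 2)) (hf3int.const_mul Q)
      have h2 := condExp_add (μ := μ) (m := F t) hf1int (hgδint.const_mul 2)
      have hΔeq : Δ = (f1 + fun ω => 2 * (g ω * δ ω)) - fun ω => Q * f3 ω := rfl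
      rw [hΔeq]
      filter_upwards [h1, h2, hmul2] with ω hω1 hω2 hω3
      simp only [Pi.sub_apply, Pi.add_apply] at hω1 hω2 ⊢
      rw [hω1, hω2, hω3, hQf3]
    filter_upwards [hce1, hceΔ, hpos, hf1ce] with ω h1 h2 h3 h4
    rw [h1, hceMt, h2]
    have hind : A.indicator (fun _ => Q) ω = Q * f3 ω := by
      by_cases h : ω ∈ A
      · simp [hf3_def, Set.indicator_of_mem h]
      · simp [hf3_def, Set.indicator_of_notMem h]
    rw [hind] at h4
    simp only [Pi.zero_apply] at h3
    linarith
  -- tower property: the bound at time 0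
  have hC : ∀ t : ℕ, (fun ω => (D - S 0 ω) ^ 2) ≤ᵐ[μ] μ[M t|F 0] := by
    intro t
    induction t with
    | zero =>
      have hM0 : M 0 = fun ω => (D - S 0 ω) ^ 2 := by
        funext ω
        simp [hM_def, Nat.zero_min]
      rw [condExp_of_stronglyMeasurable (hle 0) (hMmeas 0) (hMint 0), hM0]
    | succ t ih =>
      have h1 : μ[M (t + 1)|F 0] =ᵐ[μ] μ[μ[M (t + 1)|F t]|F 0] :=
        (condExp_condExp_of_le (F.mono (Nat.zero_le t)) (hle t)).symm
      have h2 : μ[M t|F 0] ≤ᵐ[μ] μ[μ[M (t + 1)|F t]|F 0] :=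
        condExp_mono (hMint t) integrable_condExp (key t)
      filter_upwards [h1, h2, ih] with ω hω1 hω2 hω3
      rw [hω1]
      exact le_trans hω3 hω2
  have hS0bdd : ∀ᵐ ω ∂μ, S 0 ω ∈ Set.Icc d D := by
    filter_upwards [hbdd 0] with ω h
    simpa [Nat.zero_min] using h
  have hS0sqint : Integrable (fun ω => (D - S 0 ω) ^ 2) μ := by
    refine Integrable.mono' (integrable_const ((D - d) ^ 2))
      ((stronglyMeasurable_const.sub ((hadapted 0).stronglyMeasurable.mono (hle 0))).pow 2).aestronglyMeasurable ?_
    filter_upwards [hS0bdd] with ω h using habs _ h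
  -- uniform integral bound on the stopped time
  have hNle : ∀ t : ℕ, ∫ ω, ((min t (T ω) : ℕ) : ℝ) ∂μ ≤ (D - d) ^ 2 / Q := by
    intro t
    have h0 : (0 : ℝ) ≤ ∫ ω, (D - S 0 ω) ^ 2 ∂μ := integral_nonneg fun ω => sq_nonneg _
    have h1 : ∫ ω, (D - S 0 ω) ^ 2 ∂μ ≤ ∫ ω, (μ[M t|F 0]) ω ∂μ :=
      integral_mono_ae hS0sqint integrable_condExp (hC t)
    have h2 : ∫ ω, (μ[M t|F 0]) ω ∂μ = ∫ ω, M t ω ∂μ := integral_condExp (hle 0)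
    have h3 : ∫ ω, M t ω ∂μ
        = ∫ ω, (D - S (min t (T ω)) ω) ^ 2 ∂μ - Q * ∫ ω, ((min t (T ω) : ℕ) : ℝ) ∂μ := by
      rw [hM_def]
      rw [integral_sub (hX2int t) ((hNint t).const_mul Q), integral_const_mul]
    have h4 : ∫ ω, (D - S (min t (T ω)) ω) ^ 2 ∂μ ≤ (D - d) ^ 2 := by
      have := integral_mono_ae (hX2int t) (integrable_const ((D - d) ^ 2)) ?_
      · simpa using this
      · filter_upwards [hbdd t] with ω h
        have := habs _ h
        rw [Real.norm_eq_abs, abs_of_nonneg (sq_nonneg _)] at this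
        exact this
    rw [le_div_iff₀ hQ, mul_comm]
    linarith
  -- integrability of T
  have hTnn : ∀ ω, (0 : ℝ) ≤ (T ω : ℝ) := fun ω => Nat.cast_nonneg _
  have hNmeas : ∀ t : ℕ, Measurable fun ω => ((min t (T ω) : ℕ) : ℝ) := fun t =>
    (measurable_from_top (f := fun n : ℕ => (n : ℝ))).comp (measurable_const.min hTmeas)
  have hTR : Integrable (fun ω => (T ω : ℝ)) μ := by
    rw [← lintegral_ofReal_ne_top_iff_integrable hTR_meas.aestronglyMeasurable
      (ae_of_all _ hTnn)]
    have hkey : ∫⁻ ω, ENNReal.ofReal ((T ω : ℝ)) ∂μ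
        = ⨆ t : ℕ, ∫⁻ ω, ENNReal.ofReal (((min t (T ω) : ℕ) : ℝ)) ∂μ := by
      rw [← lintegral_iSup (fun t => (hNmeas t).ennreal_ofReal) ?_]
      · congr 1
        funext ω
        refine le_antisymm (le_iSup_of_le (T ω) ?_) (iSup_le fun t => ?_)
        · simp
        · exact ENNReal.ofReal_le_ofReal (by exact_mod_cast min_le_right t (T ω))
      · intro m n hmn ω
        exact ENNReal.ofReal_le_ofReal (by exact_mod_cast min_le_min hmn le_rfl)
    rw [hkey]
    refine ne_top_of_le_ne_top (b := ENNReal.ofReal ((D - d) ^ 2 / Q)) ?_ (iSup_le fun t => ?_)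
    · exact ENNReal.ofReal_ne_top
    · rw [← ofReal_integral_eq_lintegral_ofReal (hNint t)
        (ae_of_all _ fun ω => by positivity)]
      exact ENNReal.ofReal_le_ofReal (hNle t)
  -- the remainder terms
  set R : ℕ → Ω → ℝ := fun t ω => (T ω : ℝ) - ((min t (T ω) : ℕ) : ℝ) with hR_def
  have hRint : ∀ t : ℕ, Integrable (R t) μ := fun t => hTR.sub (hNint t)
  have hR_nonneg : ∀ t ω, 0 ≤ R t ω := fun t ω => by
    rw [hR_def]; simp only [sub_nonneg]
    exact_mod_cast min_le_right t (T ω)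
  have hR_leT : ∀ t ω, R t ω ≤ (T ω : ℝ) := fun t ω => by
    rw [hR_def]; simp only [sub_le_self_iff]; positivity
  have hR_anti : ∀ t ω, R (t + 1) ω ≤ R t ω := fun t ω => by
    rw [hR_def]
    simp only [sub_le_sub_iff_left]
    exact_mod_cast min_le_min (Nat.le_succ t) le_rfl
  set r : ℕ → Ω → ℝ := fun t => μ[R t|F 0] with hr_def
  have hr_meas : ∀ t : ℕ, StronglyMeasurable (r t) := fun t =>
    stronglyMeasurable_condExp.mono (hle 0)
  have hr_nonneg : ∀ t : ℕ, 0 ≤ᵐ[μ] r t := fun t =>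
    condExp_nonneg (ae_of_all _ fun ω => hR_nonneg t ω)
  have hr_anti : ∀ t : ℕ, r (t + 1) ≤ᵐ[μ] r t := fun t =>
    condExp_mono (hRint (t + 1)) (hRint t) (ae_of_all _ fun ω => hR_anti t ω)
  have hr_le0 : ∀ t : ℕ, r t ≤ᵐ[μ] r 0 := fun t => by
    refine condExp_mono (hRint t) (hRint 0) (ae_of_all _ fun ω => ?_)
    rw [hR_def]
    simp only [Nat.zero_min, Nat.cast_zero, sub_zero]
    exact hR_leT t ω
  set L : Ω → ℝ := fun ω => ⨅ t : ℕ, r t ω with hL_def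
  have hL_meas : Measurable L := Measurable.iInf fun t => (hr_meas t).measurable
  have hgood : ∀ᵐ ω ∂μ,
      (∀ t : ℕ, 0 ≤ r t ω) ∧ (∀ t : ℕ, r (t + 1) ω ≤ r t ω) ∧ (∀ t : ℕ, r t ω ≤ r 0 ω) := by
    refine ((ae_all_iff.mpr hr_nonneg).and ((ae_all_iff.mpr hr_anti).and
      (ae_all_iff.mpr hr_le0))).mono ?_
    exact fun ω h => ⟨h.1, h.2.1, h.2.2⟩
  have hLtend : ∀ᵐ ω ∂μ, Tendsto (fun t => r t ω) atTop (nhds (L ω)) := by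
    filter_upwards [hgood] with ω h
    exact tendsto_atTop_ciInf (antitone_nat_of_succ_le h.2.1)
      ⟨0, by rintro x ⟨t, rfl⟩; exact h.1 t⟩
  have hL_nonneg : 0 ≤ᵐ[μ] L := by
    filter_upwards [hgood] with ω h
    exact le_ciInf fun t => h.1 t
  have hL_bdd : ∀ᵐ ω ∂μ, ‖L ω‖ ≤ |r 0 ω| := by
    filter_upwards [hgood, hL_nonneg] with ω h hL0
    rw [Real.norm_eq_abs, abs_of_nonneg hL0]
    refine le_trans (ciInf_le ⟨0, by rintro x ⟨t, rfl⟩; exact h.1 t⟩ 0) (le_abs_self _)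
  have hL_int : Integrable L μ :=
    Integrable.mono' integrable_condExp.abs hL_meas.aestronglyMeasurable hL_bdd
  have htend1 : Tendsto (fun t => ∫ ω, r t ω ∂μ) atTop (nhds (∫ ω, L ω ∂μ)) := by
    refine tendsto_integral_of_dominated_convergence (fun ω => |r 0 ω|)
      (fun t => (hr_meas t).aestronglyMeasurable) integrable_condExp.abs
      (fun t => ?_) hLtend
    filter_upwards [hgood] with ω h
    rw [Real.norm_eq_abs, abs_of_nonneg (h.1 t)]
    exact le_trans (h.2.2 t) (le_abs_self _)
  have htend2 : Tendsto (fun t => ∫ ω, r t ω ∂μ) atTop (nhds 0) := by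
    have heq : ∀ t : ℕ, ∫ ω, r t ω ∂μ = ∫ ω, R t ω ∂μ := fun t => integral_condExp (hle 0)
    simp_rw [heq]
    have h0 : Tendsto (fun t : ℕ => ∫ ω, R t ω ∂μ) atTop (nhds (∫ ω, (0 : ℝ) ∂μ)) := by
      refine tendsto_integral_of_dominated_convergence (fun ω => (T ω : ℝ))
        (fun t => (hTR_meas.sub (hNmeas t)).aestronglyMeasurable) hTR
        (fun t => ae_of_all _ fun ω => ?_) (ae_of_all _ fun ω => ?_)
      · rw [Real.norm_eq_abs, abs_of_nonneg (hR_nonneg t ω)]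
        exact hR_leT t ω
      · refine Tendsto.congr' ?_ tendsto_const_nhds
        filter_upwards [eventually_ge_atTop (T ω)] with t ht
        rw [hR_def]
        simp [min_eq_right ht]
    simpa using h0
  have hL_zero : L =ᵐ[μ] 0 := by
    have hint0 : ∫ ω, L ω ∂μ = 0 := tendsto_nhds_unique htend1 htend2
    exact (integral_eq_zero_iff_of_nonneg_ae hL_nonneg hL_int).mp hint0
  have hr_to_0 : ∀ᵐ ω ∂μ, Tendsto (fun t => r t ω) atTop (nhds 0) := by
    filter_upwards [hLtend, hL_zero] with ω h1 h2
    rw [Pi.zero_apply] at h2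
    rwa [h2] at h1
  -- main inequality for each t
  have hmain : ∀ t : ℕ, ∀ᵐ ω ∂μ,
      Q * (μ[fun ω' => (T ω' : ℝ)|F 0]) ω
        ≤ (μ[fun ω' => (D - S (T ω') ω') ^ 2|F 0]) ω - (D - S 0 ω) ^ 2
            + ((D - d) ^ 2 + Q) * r t ω := by
    intro t
    -- split the conditional expectation of M t
    have hsplit : μ[M t|F 0] =ᵐ[μ]
        fun ω => (μ[fun ω' => (D - S (min t (T ω')) ω') ^ 2|F 0]) ω
          - Q * (μ[fun ω' => ((min t (T ω') : ℕ) : ℝ)|F 0]) ω := by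
      have hMt : M t = (fun ω => (D - S (min t (T ω)) ω) ^ 2)
          - fun ω => Q * ((min t (T ω) : ℕ) : ℝ) := rfl
      have h1 := condExp_sub (μ := μ) (m := F 0) (hX2int t) ((hNint t).const_mul Q)
      have h2 : μ[fun ω => Q * ((min t (T ω) : ℕ) : ℝ)|F 0] =ᵐ[μ]
          fun ω => Q * (μ[fun ω' => ((min t (T ω') : ℕ) : ℝ)|F 0]) ω := by
        have := condExp_smul (μ := μ) (m := F 0) Q (fun ω => ((min t (T ω) : ℕ) : ℝ))
        simpa [smul_eq_mul, Pi.smul_def] using this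
      rw [hMt]
      filter_upwards [h1, h2] with ω hω1 hω2
      simp only [Pi.sub_apply] at hω1
      rw [hω1, hω2]
    -- relate the conditional expectation of the stopped time to r
    have hNsplit : μ[fun ω => ((min t (T ω) : ℕ) : ℝ)|F 0] =ᵐ[μ]
        fun ω => (μ[fun ω' => (T ω' : ℝ)|F 0]) ω - r t ω := by
      have h1 := condExp_sub (μ := μ) (m := F 0) hTR (hNint t)
      have hrω : r t = μ[(fun ω => (T ω : ℝ)) - fun ω => ((min t (T ω) : ℕ) : ℝ)|F 0] := rfl
      filter_upwards [h1] with ω hω1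
      simp only [Pi.sub_apply] at hω1
      rw [hrω, hω1]
      ring
    -- bound the stopped square by the final square plus remainder
    have hsq : ∀ᵐ ω ∂μ, (D - S (min t (T ω)) ω) ^ 2
        ≤ (D - S (T ω) ω) ^ 2 + (D - d) ^ 2 * R t ω := by
      filter_upwards [hbdd t, hTbdd] with ω hb hw
      by_cases h : T ω ≤ t
      · have hmin : min t (T ω) = T ω := min_eq_right h
        have hR0 : R t ω = 0 := by simp only [hR_def]; simp [hmin]
        rw [hmin, hR0]
        simp
      · have ht' : t < T ω := not_le.mp h
        have h1 : (D - S (min t (T ω)) ω) ^ 2 ≤ (D - d) ^ 2 := by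
          have := habs _ hb
          rwa [Real.norm_eq_abs, abs_of_nonneg (sq_nonneg _)] at this
        have h2 : (1 : ℝ) ≤ R t ω := by
          simp only [hR_def]
          rw [min_eq_left ht'.le]
          have : (t : ℝ) + 1 ≤ (T ω : ℝ) := by exact_mod_cast ht'
          linarith
        nlinarith [sq_nonneg (D - S (T ω) ω), sq_nonneg (D - d)]
    have hsqce : μ[fun ω' => (D - S (min t (T ω')) ω') ^ 2|F 0] ≤ᵐ[μ]
        fun ω => (μ[fun ω' => (D - S (T ω') ω') ^ 2|F 0]) ω + (D - d) ^ 2 * r t ω := by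
      have h1 := condExp_mono (μ := μ) (m := F 0) (hX2int t)
        (hWint.add ((hRint t).const_mul ((D - d) ^ 2)))
        (by filter_upwards [hsq] with ω h using h)
      have h2 := condExp_add (μ := μ) (m := F 0) hWint ((hRint t).const_mul ((D - d) ^ 2))
      have h3 : μ[fun ω => (D - d) ^ 2 * R t ω|F 0] =ᵐ[μ]
          fun ω => (D - d) ^ 2 * r t ω := by
        have hsm := condExp_smul (μ := μ) (m := F 0) ((D - d) ^ 2) (R t)
        have hrω : r t = μ[R t|F 0] := rfl
        filter_upwards [hsm] with ω hω
        rw [hrω]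
        simpa [smul_eq_mul, Pi.smul_def] using hω
      filter_upwards [h1, h2, h3] with ω hω1 hω2 hω3
      simp only [Pi.add_apply] at hω2
      refine le_trans hω1 ?_
      rw [hω2, hω3]
    filter_upwards [hC t, hsplit, hNsplit, hsqce] with ω h1 h2 h3 h4
    rw [h2, h3] at h1
    linarith
  have hmain' : ∀ᵐ ω ∂μ, ∀ t : ℕ,
      Q * (μ[fun ω' => (T ω' : ℝ)|F 0]) ω
        ≤ (μ[fun ω' => (D - S (T ω') ω') ^ 2|F 0]) ω - (D - S 0 ω) ^ 2
            + ((D - d) ^ 2 + Q) * r t ω := ae_all_iff.mpr hmain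
  filter_upwards [hmain', hr_to_0] with ω hm htend
  have hlim : Tendsto
      (fun t => (μ[fun ω' => (D - S (T ω') ω') ^ 2|F 0]) ω - (D - S 0 ω) ^ 2
        + ((D - d) ^ 2 + Q) * r t ω) atTop
      (nhds ((μ[fun ω' => (D - S (T ω') ω') ^ 2|F 0]) ω - (D - S 0 ω) ^ 2)) := by
    have hc : Tendsto (fun _ : ℕ => (μ[fun ω' => (D - S (T ω') ω') ^ 2|F 0]) ω
        - (D - S 0 ω) ^ 2) atTop
        (nhds ((μ[fun ω' => (D - S (T ω') ω') ^ 2|F 0]) ω - (D - S 0 ω) ^ 2)) :=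
      tendsto_const_nhds
    have h2 := htend.const_mul ((D - d) ^ 2 + Q)
    simpa using hc.add h2
  have hfin : Q * (μ[fun ω' => (T ω' : ℝ)|F 0]) ω
      ≤ (μ[fun ω' => (D - S (T ω') ω') ^ 2|F 0]) ω - (D - S 0 ω) ^ 2 :=
    ge_of_tendsto' hlim hm
  rw [le_div_iff₀ hQ]
  linarith
end

section
/- Let d, D ∈ ℝ with d ≤ D, Q ∈ ℝ_{>0}, (S_t)_{t∈ℕ} a real-valued stochastic process adapted to a filtration (F_t)_{t∈ℕ}, and T a stopping time with respect to (F_t). Assume for all t ∈ ℕ: (i) S_{min{t,T}} ∈ [d, D] almost surely; (ii) E[S_{t+1} | F_t]·1{t < T} ≤ S_t·1{t < T}; and (iii) E[(S_{t+1} − S_t)² | F_t]·1{t < T} ≥ Q·1{t < T}. Let M ∈ ℝ_{≥0} satisfy M ≥ (D − S_t)²·1{t ≤ T} for all t ∈ ℕ almost surely. Then the process Z_t = ((D − S_t)² − Qt − M)·1{t ≤ T} is a submartingale with respect to (F_t), i.e., E[Z_{t+1} | F_t] ≥ Z_t for all t ∈ ℕ. -/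
open MeasureTheory

/-- Under the drift and variance conditions before the stopping time `T`,
the process `Z_t = ((D − S_t)² − Q·t − M)·1{t ≤ T}` is a submartingale, i.e.
`E[Z_{t+1} | F_t] ≥ Z_t` for all `t`. -/
theorem stopped_potential_is_submartingale
    {Ω : Type*} {mΩ : MeasurableSpace Ω} {μ : Measure Ω} [IsProbabilityMeasure μ]
    (F : Filtration ℕ mΩ) (S : ℕ → Ω → ℝ) (T : Ω → ℕ)
    (d D Q : ℝ) (hdD : d ≤ D) (hQ : 0 < Q)
    (hadapted : Adapted F S)
    (hSint : ∀ t : ℕ, Integrable (S t) μ)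
    (hSqint : ∀ t : ℕ, Integrable (fun ω => (S (t + 1) ω - S t ω) ^ 2) μ)
    (hT : IsStoppingTime F (fun ω => (T ω : WithTop ℕ)))
    (hbdd : ∀ t : ℕ, ∀ᵐ ω ∂μ, S (min t (T ω)) ω ∈ Set.Icc d D)
    (hsuper : ∀ t : ℕ, ∀ᵐ ω ∂μ,
      (μ[S (t + 1) | F t]) ω * (if t < T ω then (1 : ℝ) else 0)
        ≤ S t ω * (if t < T ω then (1 : ℝ) else 0))
    (hvar : ∀ t : ℕ, ∀ᵐ ω ∂μ,
      Q * (if t < T ω then (1 : ℝ) else 0)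
        ≤ (μ[fun ω' => (S (t + 1) ω' - S t ω') ^ 2 | F t]) ω
            * (if t < T ω then (1 : ℝ) else 0))
    (M : ℝ) (hM0 : 0 ≤ M)
    (hM : ∀ t : ℕ, ∀ᵐ ω ∂μ,
      (D - S t ω) ^ 2 * (if t ≤ T ω then (1 : ℝ) else 0) ≤ M) :
    ∀ t : ℕ,
      (fun ω => ((D - S t ω) ^ 2 - Q * t - M) * (if t ≤ T ω then (1 : ℝ) else 0))
        ≤ᵐ[μ]
      μ[fun ω => ((D - S (t + 1) ω) ^ 2 - Q * (t + 1) - M)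
          * (if t + 1 ≤ T ω then (1 : ℝ) else 0) | F t] := by
  intro t
  set c : ℝ := Q * ((t : ℝ) + 1) + M with hc
  set i : Ω → ℝ := fun ω => if t < T ω then (1 : ℝ) else 0 with hi
  -- measurability of the indicator
  have hmeas_set : MeasurableSet[F t] {ω | t < T ω} := by
    have := (hT t).compl
    simpa [Set.compl_setOf, not_le, WithTop.coe_lt_coe] using this
  have hi_sm : StronglyMeasurable[F t] i := by
    exact StronglyMeasurable.ite hmeas_set stronglyMeasurable_const stronglyMeasurable_const
  have hi_sm0 : StronglyMeasurable i := hi_sm.mono (F.le t)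
  have hSt_sm : StronglyMeasurable[F t] (S t) := (hadapted t).stronglyMeasurable
  -- auxiliary functions
  set A : Ω → ℝ := fun ω => ((D - S t ω) * i ω) ^ 2 with hA
  set g : Ω → ℝ := fun ω => 2 * ((D - S t ω) * i ω) with hg
  set h : Ω → ℝ := fun ω => S t ω - S (t + 1) ω with hh
  set q : Ω → ℝ := fun ω => (S (t + 1) ω - S t ω) ^ 2 with hq
  set V : Ω → ℝ := fun ω => A ω + g ω * h ω + (q ω - c) with hV
  have hg_sm : StronglyMeasurable[F t] g :=
    (stronglyMeasurable_const.mul ((stronglyMeasurable_const.sub hSt_sm).mul hi_sm))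
  have hA_sm : StronglyMeasurable[F t] A :=
    ((stronglyMeasurable_const.sub hSt_sm).mul hi_sm).pow 2
  -- a.e. bounds
  have hbound : ∀ᵐ ω ∂μ, |(D - S t ω) * i ω| ≤ D - d ∧ 0 ≤ (D - S t ω) * i ω := by
    filter_upwards [hbdd t] with ω hω
    by_cases hlt : t < T ω
    · have hmin : min t (T ω) = t := min_eq_left hlt.le
      rw [hmin] at hω
      simp only [hi, if_pos hlt, mul_one]
      constructor
      · rw [abs_le]; constructor <;> linarith [hω.1, hω.2]
      · linarith [hω.2]
    · simp only [hi, if_neg hlt, mul_zero]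
      refine ⟨by simpa using sub_nonneg.mpr hdD, le_refl _⟩
  -- integrabilities
  have hh_int : Integrable h μ := (hSint t).sub (hSint (t + 1))
  have hq_int : Integrable q μ := hSqint t
  have hA_int : Integrable A μ := by
    refine Integrable.mono' (integrable_const ((D - d) ^ 2)) (hA_sm.mono (F.le t)).aestronglyMeasurable ?_
    filter_upwards [hbound] with ω hω
    have := hω.1
    have h0 : |(D - S t ω) * i ω| ^ 2 ≤ (D - d) ^ 2 :=
      pow_le_pow_left₀ (abs_nonneg _) this 2
    simp only [A, Real.norm_eq_abs, abs_pow]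
    exact h0
  have hgh_int : Integrable (g * h) μ := by
    refine Integrable.bdd_mul (c := 2 * (D - d)) hh_int (hg_sm.mono (F.le t)).aestronglyMeasurable ?_
    filter_upwards [hbound] with ω hω
    have := hω.1
    calc ‖g ω‖ = 2 * |(D - S t ω) * i ω| := by
          simp [hg, Real.norm_eq_abs, abs_mul]
      _ ≤ 2 * (D - d) := by linarith
  have hV_int : Integrable V μ := (hA_int.add hgh_int).add (hq_int.sub (integrable_const c))
  have hiV_int : Integrable (i * V) μ := by
    refine Integrable.bdd_mul (c := 1) hV_int hi_sm0.aestronglyMeasurable ?_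
    filter_upwards with ω
    by_cases hlt : t < T ω <;> simp [hi, hlt]
  -- rewrite the target function as i * V
  have hfun : (fun ω => ((D - S (t + 1) ω) ^ 2 - Q * (t + 1) - M)
      * (if t + 1 ≤ T ω then (1 : ℝ) else 0)) = i * V := by
    funext ω
    by_cases hlt : t < T ω
    · have hle : t + 1 ≤ T ω := hlt
      simp only [Pi.mul_apply, hi, hV, hA, hg, hh, hq, if_pos hlt, if_pos hle, mul_one, one_mul]
      push_cast
      ring
    · have hle : ¬ t + 1 ≤ T ω := hlt
      simp [Pi.mul_apply, hi, if_neg hlt, if_neg hle]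
  rw [hfun]
  -- compute the conditional expectation
  have hstep1 : μ[i * V | F t] =ᵐ[μ] i * μ[V | F t] :=
    condExp_mul_of_stronglyMeasurable_left hi_sm hiV_int hV_int
  have hstep2 : μ[V | F t] =ᵐ[μ]
      fun ω => A ω + g ω * (μ[h | F t]) ω + ((μ[q | F t]) ω - c) := by
    have e1 : μ[V | F t] =ᵐ[μ] μ[fun ω => A ω + g ω * h ω | F t] + μ[fun ω => q ω - c | F t] :=
      condExp_add (hA_int.add hgh_int) (hq_int.sub (integrable_const c)) _
    have e2 : μ[fun ω => A ω + g ω * h ω | F t] =ᵐ[μ] μ[A | F t] + μ[g * h | F t] :=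
      condExp_add hA_int hgh_int _
    have e3 : μ[A | F t] = A := condExp_of_stronglyMeasurable (F.le t) hA_sm hA_int
    have e4 : μ[g * h | F t] =ᵐ[μ] g * μ[h | F t] :=
      condExp_mul_of_stronglyMeasurable_left hg_sm hgh_int hh_int
    have e5 : μ[fun ω => q ω - c | F t] =ᵐ[μ] μ[q | F t] - μ[fun _ => c | F t] :=
      condExp_sub hq_int (integrable_const c) _
    have e6 : μ[fun _ : Ω => c | F t] = fun _ => c := condExp_const (F.le t) c
    filter_upwards [e1, e2, e4, e5] with ω h1 h2 h4 h5
    simp only [Pi.add_apply, Pi.sub_apply, Pi.mul_apply] at *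
    rw [h1, h2, h4, h5, e3, e6]
  -- supermartingale fact: μ[h|F t] * i ≥ 0 a.e.
  have hEh : ∀ᵐ ω ∂μ, 0 ≤ (μ[h | F t]) ω * i ω := by
    have e : μ[h | F t] =ᵐ[μ] fun ω => S t ω - (μ[S (t + 1) | F t]) ω := by
      have hh' : h = S t - S (t + 1) := rfl
      rw [hh']
      have := condExp_sub (m := F t) (hSint t) (hSint (t + 1)) (μ := μ)
      have e0 : μ[S t | F t] = S t := condExp_of_stronglyMeasurable (F.le t) hSt_sm (hSint t)
      filter_upwards [this] with ω hω
      simp only [Pi.sub_apply] at hω ⊢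
      rw [hω, e0]
    filter_upwards [e, hsuper t] with ω he hs
    rw [he]
    simp only [hi]
    by_cases hlt : t < T ω
    · simp only [if_pos hlt, mul_one] at hs ⊢
      linarith
    · simp [if_neg hlt]
  -- final a.e. inequality
  have heq : μ[i * V | F t] =ᵐ[μ]
      fun ω => i ω * (A ω + g ω * (μ[h | F t]) ω + ((μ[q | F t]) ω - c)) := by
    filter_upwards [hstep1, hstep2] with ω h1 h2
    rw [h1]; simp only [Pi.mul_apply]; rw [h2]
  filter_upwards [heq, hbound, hEh, hvar t, hM t] with ω heqω hb he hv hm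
  rw [heqω]
  by_cases hlt : t < T ω
  · have hle : t ≤ T ω := hlt.le
    simp only [hi, hA, hg, if_pos hlt, if_pos hle, mul_one, one_mul] at hb he hv hm ⊢
    have hg0 : 0 ≤ 2 * (D - S t ω) := by linarith [hb.2]
    have hgh0 : 0 ≤ 2 * (D - S t ω) * (μ[h | F t]) ω := mul_nonneg hg0 he
    have hvq : Q ≤ (μ[q | F t]) ω := hv
    push_cast
    nlinarith [hgh0, hvq]
  · simp only [hi, if_neg hlt, zero_mul, mul_zero]
    by_cases hle : t ≤ T ω
    · simp only [if_pos hle, mul_one] at hm ⊢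
      have ht0 : (0 : ℝ) ≤ Q * t := mul_nonneg hQ.le (Nat.cast_nonneg t)
      nlinarith
    · simp [if_neg hle]
end

section
/- If a polymer model P = (C, w, ≁) satisfies the Fernández–Procacci condition for a function f : C → ℝ_{>0}, then P also satisfies the clique dynamics condition for the same function f. -/
open scoped ENNReal Classical

/-- An abstract polymer model: a set `C` of polymers with positive real weights and a
reflexive, symmetric incompatibility relation. -/
structure PolymerModel (C : Type*) where
  w : C → ℝ
  w_pos : ∀ γ, 0 < w γ
  incomp : C → C → Prop
  incomp_refl : ∀ γ, incomp γ γ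
  incomp_symm : ∀ γ γ', incomp γ γ' → incomp γ' γ

namespace PolymerModel

variable {C : Type*}

/-- A polymer family: a finite set of pairwise compatible polymers. -/
def IsFamily (P : PolymerModel C) (Γ : Finset C) : Prop :=
  ∀ γ ∈ Γ, ∀ γ' ∈ Γ, γ ≠ γ' → ¬P.incomp γ γ'

/-- A polymer clique: a set of pairwise incompatible polymers. -/
def IsClique (P : PolymerModel C) (Λ : Set C) : Prop :=
  ∀ γ ∈ Λ, ∀ γ' ∈ Λ, P.incomp γ γ'

/-- The partition function restricted to `B`:
`Z_B = ∑_{Γ ∈ F_B} ∏_{γ ∈ Γ} w_γ` (valued in `ℝ≥0∞`). -/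
noncomputable def Z (P : PolymerModel C) (B : Set C) : ℝ≥0∞ :=
  ∑' Γ : {Γ : Finset C // P.IsFamily Γ ∧ ↑Γ ⊆ B}, ∏ γ ∈ Γ.1, ENNReal.ofReal (P.w γ)

/-- The Gibbs distribution restricted to `B`, regarded as a distribution on all finite
sets of polymers (assigning `0` outside `F_B`). -/
noncomputable def gibbs (P : PolymerModel C) (B : Set C) (Γ : Finset C) : ℝ≥0∞ :=
  if P.IsFamily Γ ∧ ↑Γ ⊆ B then (∏ γ ∈ Γ, ENNReal.ofReal (P.w γ)) / P.Z B else 0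

/-- The clique dynamics condition for a function `f : C → ℝ_{>0}`:
for all `γ`, `∑_{γ' ≁ γ, γ' ≠ γ} f(γ') w_{γ'}/(1 + w_{γ'}) ≤ f(γ)`. -/
def CliqueDynamicsCondition (P : PolymerModel C) (f : C → ℝ) : Prop :=
  ∀ γ : C,
    ∑' γ' : {γ' : C // P.incomp γ' γ ∧ γ' ≠ γ},
        ENNReal.ofReal (f γ' * P.w γ' / (1 + P.w γ')) ≤ ENNReal.ofReal (f γ)

/-- Total variation distance between two distributions on finite sets of polymers. -/
noncomputable def dTV (μ ν : Finset C → ℝ≥0∞) : ℝ≥0∞ :=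
  (∑' Γ : Finset C, ((μ Γ - ν Γ) + (ν Γ - μ Γ))) / 2

end PolymerModel

/-- The Fernández–Procacci condition for a function `f : C → ℝ_{>0}`: for all `γ`,
`∑_{Γ ∈ F_{N(γ)}} ∏_{γ' ∈ Γ} f(γ') w_{γ'} ≤ f(γ)`, where `N(γ)` is the set of polymers
incompatible with `γ`. -/
def PolymerModel.FernandezProcacciCondition {C : Type*} (P : PolymerModel C)
    (f : C → ℝ) : Prop :=
  ∀ γ : C,
    ∑' Γ : {Γ : Finset C // P.IsFamily Γ ∧ ↑Γ ⊆ {γ' | P.incomp γ' γ}},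
        ∏ γ' ∈ Γ.1, ENNReal.ofReal (f γ' * P.w γ') ≤ ENNReal.ofReal (f γ)

/-- If a polymer model satisfies the Fernández–Procacci condition
for `f : C → ℝ_{>0}`, then it also satisfies the clique dynamics condition for `f`. -/
theorem fp_implies_clique_dynamics {C : Type*} [Countable C] [Nonempty C]
    (P : PolymerModel C) (f : C → ℝ) (hf : ∀ γ, 0 < f γ)
    (hFP : P.FernandezProcacciCondition f) :
    P.CliqueDynamicsCondition f := by
  intro γ
  refine le_trans ?_ (hFP γ)
  have key : ∀ γ' : {γ' : C // P.incomp γ' γ ∧ γ' ≠ γ},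
      P.IsFamily {γ'.1} ∧ ↑({γ'.1} : Finset C) ⊆ {x | P.incomp x γ} := by
    rintro ⟨γ', h1, h2⟩
    constructor
    · intro a ha b hb hab
      simp only [Finset.mem_singleton] at ha hb
      exact absurd (ha.trans hb.symm) hab
    · intro x hx
      simp only [Finset.coe_singleton, Set.mem_singleton_iff] at hx
      subst hx; exact h1
  refine Summable.tsum_le_tsum_of_inj (fun γ' => ⟨{γ'.1}, key γ'⟩) ?_ (fun _ _ => zero_le) ?_
    ENNReal.summable ENNReal.summable
  · intro a b hab
    simp only [Subtype.mk.injEq, Finset.singleton_inj] at hab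
    exact Subtype.ext hab
  · rintro ⟨γ', h1, h2⟩
    simp only [Finset.prod_singleton]
    apply ENNReal.ofReal_le_ofReal
    have hw := P.w_pos γ'
    have hfγ := hf γ'
    rw [div_le_iff₀ (by linarith)]
    nlinarith [mul_pos (mul_pos hfγ hw) hw]
end

section
/- Let P = (C, w, ≁) be a polymer model with finite partition function Z, let {Λ_i}_{i∈[m]} be a polymer clique cover of size m, and let |·| : C → ℝ_{>0} be a size function. Suppose there are k ∈ ℝ and ε ∈ (0,1) such that for all i ∈ [m], ∑_{γ ∈ Λ_i, |γ| > k} w_γ ≤ ε/m. Then e^{−ε} ≤ Z_{≤k}/Z ≤ 1 and d_TV(μ, μ_{≤k}) ≤ ε. -/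
open scoped ENNReal Classical

namespace PMaux

open PolymerModel

variable {C : Type*} (P : PolymerModel C)

/-- weight of a finset -/
noncomputable def pw (Γ : Finset C) : ℝ≥0∞ := ∏ γ ∈ Γ, ENNReal.ofReal (P.w γ)

noncomputable def g (B : Set C) (Γ : Finset C) : ℝ≥0∞ :=
  if P.IsFamily Γ ∧ ↑Γ ⊆ B then pw P Γ else 0

lemma Z_eq (B : Set C) : P.Z B = ∑' Γ : Finset C, g P B Γ := by
  rw [PolymerModel.Z]
  have h := tsum_subtype {Γ : Finset C | P.IsFamily Γ ∧ ↑Γ ⊆ B} (pw P)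
  rw [show (∑' Γ : {Γ : Finset C // P.IsFamily Γ ∧ ↑Γ ⊆ B},
      ∏ γ ∈ Γ.1, ENNReal.ofReal (P.w γ))
      = ∑' Γ : {Γ : Finset C | P.IsFamily Γ ∧ ↑Γ ⊆ B}, pw P ↑Γ from rfl, h]
  refine tsum_congr fun Γ => ?_
  by_cases hΓ : P.IsFamily Γ ∧ ↑Γ ⊆ B
  · simp [g, Set.indicator, hΓ]
  · simp [g, Set.indicator, hΓ]

lemma one_le_Z (B : Set C) : 1 ≤ P.Z B := by
  rw [Z_eq]
  have h := ENNReal.le_tsum (f := g P B) ∅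
  have : g P B ∅ = 1 := by
    rw [g, if_pos ⟨fun γ hγ => absurd hγ (Finset.notMem_empty γ), by simp⟩]
    simp [pw]
  rwa [this] at h

lemma g_mono {B B' : Set C} (h : B ⊆ B') (Γ : Finset C) : g P B Γ ≤ g P B' Γ := by
  by_cases hΓ : P.IsFamily Γ ∧ ↑Γ ⊆ B
  · rw [g, if_pos hΓ, g, if_pos ⟨hΓ.1, hΓ.2.trans h⟩]
  · rw [g, if_neg hΓ]; exact zero_le

lemma Z_mono {B B' : Set C} (h : B ⊆ B') : P.Z B ≤ P.Z B' := by
  rw [Z_eq, Z_eq]; exact ENNReal.tsum_le_tsum (g_mono P h)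

/-- key peeling step -/
lemma step (B D : Set C) (hD : P.IsClique D) :
    P.Z (B ∪ D) ≤ (1 + ∑' γ : D, ENNReal.ofReal (P.w γ)) * P.Z B := by
  classical
  set e : D → Finset C → ℝ≥0∞ := fun γ Γ =>
    if P.IsFamily Γ ∧ ↑Γ ⊆ B ∪ D ∧ (γ : C) ∈ Γ ∧ (γ : C) ∉ B then pw P Γ else 0 with he
  have step1 : ∀ Γ : Finset C, g P (B ∪ D) Γ ≤ g P B Γ + ∑' γ : D, e γ Γ := by
    intro Γ
    by_cases hΓ : P.IsFamily Γ ∧ ↑Γ ⊆ B ∪ D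
    · by_cases hB : ↑Γ ⊆ B
      · rw [g, if_pos hΓ, g, if_pos ⟨hΓ.1, hB⟩]; exact le_add_right le_rfl
      · obtain ⟨γ, hγΓ, hγB⟩ := Set.not_subset.1 hB
        have hγD : γ ∈ D := (hΓ.2 hγΓ).resolve_left hγB
        have : pw P Γ ≤ ∑' γ' : D, e γ' Γ := by
          have := ENNReal.le_tsum (f := fun γ' : D => e γ' Γ) ⟨γ, hγD⟩
          rwa [show e ⟨γ, hγD⟩ Γ = pw P Γ from if_pos ⟨hΓ.1, hΓ.2, hγΓ, hγB⟩] at this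
        rw [g, if_pos hΓ]; exact le_add_left this
    · rw [g, if_neg hΓ]; exact zero_le
  have step2 : ∀ γ : D, (∑' Γ : Finset C, e γ Γ)
      ≤ ENNReal.ofReal (P.w γ) * P.Z B := by
    intro γ
    have hsupp : Function.support (e γ) ⊆ {Γ : Finset C | (γ : C) ∈ Γ} := by
      intro Γ hΓ
      by_contra hmem
      apply hΓ
      rw [he]
      exact if_neg (fun h => hmem h.2.2.1)
    rw [← tsum_subtype_eq_of_support_subset hsupp, Z_eq, ← ENNReal.tsum_mul_left]
    refine ENNReal.summable.tsum_le_tsum_of_inj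
      (fun Γ : {Γ : Finset C | (γ : C) ∈ Γ} => Γ.1.erase (γ : C)) ?_ (fun _ _ => zero_le)
      ?_ ENNReal.summable
    · intro Γ₁ Γ₂ h
      apply Subtype.ext
      have h' : (Γ₁ : Finset C).erase (γ : C) = (Γ₂ : Finset C).erase (γ : C) := h
      rw [← Finset.insert_erase Γ₁.2, ← Finset.insert_erase Γ₂.2, h']
    · rintro ⟨Γ, hγΓ⟩
      by_cases hΓ : P.IsFamily Γ ∧ ↑Γ ⊆ B ∪ D ∧ (γ : C) ∈ Γ ∧ (γ : C) ∉ B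
      · obtain ⟨hfam, hsub, hmem, hnB⟩ := hΓ
        have hfam' : P.IsFamily (Γ.erase (γ : C)) := by
          intro a ha b hb hab
          exact hfam a (Finset.mem_of_mem_erase ha) b (Finset.mem_of_mem_erase hb) hab
        have hsub' : ↑(Γ.erase (γ : C)) ⊆ B := by
          intro x hx
          have hxΓ := Finset.mem_of_mem_erase (Finset.mem_coe.1 hx)
          have hxne : x ≠ (γ : C) := Finset.ne_of_mem_erase (Finset.mem_coe.1 hx)
          rcases hsub hxΓ with hxB | hxD
          · exact hxB
          · exact absurd (hD x hxD (γ : C) γ.2) (hfam x hxΓ (γ : C) hmem hxne)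
        show (if P.IsFamily Γ ∧ ↑Γ ⊆ B ∪ D ∧ (γ : C) ∈ Γ ∧ (γ : C) ∉ B then pw P Γ else 0)
            ≤ ENNReal.ofReal (P.w γ) * g P B (Γ.erase (γ : C))
        rw [if_pos ⟨hfam, hsub, hmem, hnB⟩, g, if_pos ⟨hfam', hsub'⟩, pw, pw]
        exact le_of_eq (Finset.mul_prod_erase Γ _ hmem).symm
      · show (if P.IsFamily Γ ∧ ↑Γ ⊆ B ∪ D ∧ (γ : C) ∈ Γ ∧ (γ : C) ∉ B then pw P Γ else 0)
            ≤ ENNReal.ofReal (P.w γ) * g P B (Γ.erase (γ : C))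
        rw [if_neg hΓ]
        exact zero_le
  calc P.Z (B ∪ D) = ∑' Γ : Finset C, g P (B ∪ D) Γ := Z_eq P _
    _ ≤ ∑' Γ : Finset C, (g P B Γ + ∑' γ : D, e γ Γ) := ENNReal.tsum_le_tsum step1
    _ = P.Z B + ∑' Γ : Finset C, ∑' γ : D, e γ Γ := by rw [ENNReal.tsum_add, ← Z_eq]
    _ = P.Z B + ∑' γ : D, ∑' Γ : Finset C, e γ Γ := by rw [ENNReal.tsum_comm]
    _ ≤ P.Z B + ∑' γ : D, ENNReal.ofReal (P.w γ) * P.Z B :=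
        add_le_add_right (ENNReal.tsum_le_tsum step2) _
    _ = (1 + ∑' γ : D, ENNReal.ofReal (P.w γ)) * P.Z B := by
        rw [ENNReal.tsum_mul_right, add_mul, one_mul]

/-- iterated set sequence -/
def Bseq (S : Set C) (D : ℕ → Set C) : ℕ → Set C
  | 0 => S
  | n + 1 => Bseq S D n ∪ D n

lemma Bseq_subset {S : Set C} {D : ℕ → Set C} {j n : ℕ} (h : j ≤ n) :
    Bseq S D j ⊆ Bseq S D n := by
  induction n with
  | zero => rw [Nat.le_zero.1 h]
  | succ n ih =>
    rcases Nat.lt_or_ge j (n + 1) with h' | h'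
    · exact (ih (Nat.lt_succ_iff.1 h')).trans Set.subset_union_left
    · rw [Nat.le_antisymm h h']

lemma Z_iter {S : Set C} {D : ℕ → Set C} {a : ℝ≥0∞}
    (hcl : ∀ j, P.IsClique (D j))
    (hb : ∀ j, (∑' γ : D j, ENNReal.ofReal (P.w γ)) ≤ a) :
    ∀ n, P.Z (Bseq S D n) ≤ (1 + a) ^ n * P.Z S := by
  intro n
  induction n with
  | zero => rw [pow_zero, one_mul]; exact le_rfl
  | succ n ih =>
    calc P.Z (Bseq S D (n + 1)) = P.Z (Bseq S D n ∪ D n) := rfl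
      _ ≤ (1 + ∑' γ : D n, ENNReal.ofReal (P.w γ)) * P.Z (Bseq S D n) := step P _ _ (hcl n)
      _ ≤ (1 + a) * ((1 + a) ^ n * P.Z S) :=
          mul_le_mul' (add_le_add_right (hb n) _) ih
      _ = (1 + a) ^ (n + 1) * P.Z S := by ring

end PMaux

namespace PMaux

lemma tsum_sub' {ι : Type*} {f g : ι → ℝ≥0∞} (h : ∑' i, g i ≠ ⊤) (hle : ∀ i, g i ≤ f i) :
    ∑' i, (f i - g i) = ∑' i, f i - ∑' i, g i :=
  ENNReal.eq_sub_of_add_eq h (by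
    rw [← ENNReal.tsum_add]
    exact tsum_congr fun i => tsub_add_cancel_of_le (hle i))

end PMaux


/-- If for every clique of a clique cover the polymers of size
greater than `k` have total weight at most `ε/m`, then
`e^{−ε} ≤ Z_{≤k}/Z ≤ 1` and `d_TV(μ, μ_{≤k}) ≤ ε`. -/
theorem model_truncation {C : Type*} [Countable C]
    (P : PolymerModel C) (hZfin : P.Z Set.univ ≠ ⊤)
    {m : ℕ} (hm : 0 < m) (Λ : Fin m → Set C)
    (hclique : ∀ i, P.IsClique (Λ i)) (hcover : (⋃ i, Λ i) = Set.univ)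
    (size : C → ℝ) (hsize : ∀ γ, 0 < size γ)
    (k : ℝ) (ε : ℝ) (hε : ε ∈ Set.Ioo (0 : ℝ) 1)
    (htrunc : ∀ i : Fin m,
      ∑' γ : {γ : C // γ ∈ Λ i ∧ k < size γ}, ENNReal.ofReal (P.w γ)
        ≤ ENNReal.ofReal (ε / m)) :
    (ENNReal.ofReal (Real.exp (-ε)) ≤ P.Z {γ | size γ ≤ k} / P.Z Set.univ ∧
        P.Z {γ | size γ ≤ k} / P.Z Set.univ ≤ 1) ∧
      PolymerModel.dTV (P.gibbs Set.univ) (P.gibbs {γ | size γ ≤ k})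
        ≤ ENNReal.ofReal ε := by
  classical
  obtain ⟨hε0, hε1⟩ := hε
  have hm' : (0 : ℝ) < m := Nat.cast_pos.mpr hm
  set Small : Set C := {γ | size γ ≤ k} with hSmall
  set Big : Set C := {γ | k < size γ} with hBig
  set Zu := P.Z Set.univ with hZu
  set Zs := P.Z Small with hZs
  set D : ℕ → Set C := fun j => if h : j < m then Λ ⟨j, h⟩ ∩ Big else ∅ with hD
  have hDpos : ∀ (j : ℕ) (h : j < m), D j = Λ ⟨j, h⟩ ∩ Big := by
    intro j h
    simp only [hD]
    exact dif_pos h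
  have hDneg : ∀ (j : ℕ), ¬ j < m → D j = ∅ := by
    intro j h
    simp only [hD]
    exact dif_neg h
  have hcl : ∀ j, P.IsClique (D j) := by
    intro j
    by_cases h : j < m
    · rw [hDpos j h]
      exact fun a ha b hb => hclique ⟨j, h⟩ a ha.1 b hb.1
    · rw [hDneg j h]
      exact fun a ha => absurd ha (Set.notMem_empty a)
  have hbnd : ∀ j, (∑' γ : D j, ENNReal.ofReal (P.w γ)) ≤ ENNReal.ofReal (ε / m) := by
    intro j
    by_cases h : j < m
    · rw [hDpos j h]
      exact htrunc ⟨j, h⟩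
    · rw [hDneg j h]
      simp
  have hBm : PMaux.Bseq Small D m = Set.univ := by
    apply Set.eq_univ_of_univ_subset
    intro γ _
    rcases le_or_gt (size γ) k with hs | hs
    · exact PMaux.Bseq_subset (Nat.zero_le m) hs
    · have hγ : γ ∈ ⋃ i, Λ i := hcover ▸ Set.mem_univ γ
      obtain ⟨i, hi⟩ := Set.mem_iUnion.1 hγ
      have hγD : γ ∈ D i.1 := by
        rw [hDpos i.1 i.isLt]
        exact ⟨by simpa using hi, hs⟩
      exact PMaux.Bseq_subset (Nat.succ_le_of_lt i.isLt) (Set.mem_union_right _ hγD)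
  have hiter := PMaux.Z_iter P (S := Small) hcl hbnd m
  rw [hBm] at hiter
  have hconv : (1 + ENNReal.ofReal (ε / m)) ^ m = ENNReal.ofReal ((1 + ε / m) ^ m) := by
    rw [ENNReal.ofReal_pow (by positivity),
      ENNReal.ofReal_add (by norm_num) (by positivity), ENNReal.ofReal_one]
  set A := ENNReal.ofReal ((1 + ε / m) ^ m) with hA
  have hZuA : Zu ≤ A * Zs := by rw [← hconv]; exact hiter
  have hA0 : A ≠ 0 := (ENNReal.ofReal_pos.mpr (by positivity)).ne'
  have hAt : A ≠ ⊤ := ENNReal.ofReal_ne_top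
  have hZs1 : (1 : ℝ≥0∞) ≤ Zs := PMaux.one_le_Z P Small
  have hZsu : Zs ≤ Zu := PMaux.Z_mono P (Set.subset_univ _)
  have hZu0 : Zu ≠ 0 := (lt_of_lt_of_le zero_lt_one (hZs1.trans hZsu)).ne'
  have hZst : Zs ≠ ⊤ := fun h => hZfin (top_le_iff.1 (h ▸ hZsu))
  have hpow : (1 + ε / m) ^ m ≤ Real.exp ε := by
    calc (1 + ε / m) ^ m ≤ (Real.exp (ε / m)) ^ m := by
          refine pow_le_pow_left₀ (by positivity) ?_ m
          have := Real.add_one_le_exp (ε / m)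
          linarith
      _ = Real.exp (m * (ε / m)) := (Real.exp_nat_mul _ m).symm
      _ = Real.exp ε := by
          congr 1
          field_simp
  have hinv : ENNReal.ofReal (Real.exp (-ε)) ≤ A⁻¹ := by
    rw [hA, ← ENNReal.ofReal_inv_of_pos (by positivity)]
    apply ENNReal.ofReal_le_ofReal
    rw [Real.exp_neg]
    exact inv_anti₀ (by positivity) hpow
  have hlow : ENNReal.ofReal (Real.exp (-ε)) ≤ Zs / Zu := by
    refine hinv.trans ?_
    rw [ENNReal.le_div_iff_mul_le (Or.inl hZu0) (Or.inl hZfin)]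
    calc A⁻¹ * Zu ≤ A⁻¹ * (A * Zs) := mul_le_mul_right hZuA _
      _ = (A⁻¹ * A) * Zs := (mul_assoc _ _ _).symm
      _ = Zs := by rw [ENNReal.inv_mul_cancel hA0 hAt, one_mul]
  have hup : Zs / Zu ≤ 1 := (ENNReal.div_le_div_right hZsu Zu).trans ENNReal.div_self_le_one
  refine ⟨⟨hlow, hup⟩, ?_⟩
  -- total variation bound
  have hgibbs : ∀ (B : Set C) (Γ : Finset C), P.gibbs B Γ = PMaux.g P B Γ / P.Z B := by
    intro B Γ
    rw [PolymerModel.gibbs, PMaux.g]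
    split_ifs with h
    · rfl
    · rw [ENNReal.zero_div]
  set gu : Finset C → ℝ≥0∞ := PMaux.g P Set.univ with hgu
  set gs : Finset C → ℝ≥0∞ := PMaux.g P Small with hgs
  have hgsu : ∀ Γ, gs Γ ≤ gu Γ := PMaux.g_mono P (Set.subset_univ _)
  have hsum_gu : ∑' Γ, gu Γ = Zu := (PMaux.Z_eq P _).symm
  have hsum_gs : ∑' Γ, gs Γ = Zs := (PMaux.Z_eq P _).symm
  have hdenom : ∀ x : ℝ≥0∞, x / Zu ≤ x / Zs := by
    intro x
    rw [div_eq_mul_inv, div_eq_mul_inv]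
    exact mul_le_mul_right (ENNReal.inv_le_inv.2 hZsu) x
  have hterm : ∀ Γ, (P.gibbs Set.univ Γ - P.gibbs Small Γ)
        + (P.gibbs Small Γ - P.gibbs Set.univ Γ)
      ≤ (gu Γ - gs Γ) / Zu + (gs Γ / Zs - gs Γ / Zu) := by
    intro Γ
    rw [hgibbs, hgibbs]
    refine add_le_add ?_ ?_
    · rw [tsub_le_iff_right]
      have hsplit : gu Γ / Zu = gs Γ / Zu + (gu Γ - gs Γ) / Zu := by
        rw [← ENNReal.add_div, add_tsub_cancel_of_le (hgsu Γ)]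
      rw [hsplit, add_comm ((gu Γ - gs Γ) / Zu)]
      exact add_le_add_left (hdenom _) _
    · exact tsub_le_tsub_left (ENNReal.div_le_div_right (hgsu Γ) Zu) _
  have hsum1 : (∑' Γ : Finset C, (gu Γ - gs Γ) / Zu) ≤ 1 - Zs / Zu := by
    have : (∑' Γ : Finset C, (gu Γ - gs Γ) / Zu) = (Zu - Zs) / Zu := by
      simp_rw [div_eq_mul_inv]
      rw [ENNReal.tsum_mul_right, PMaux.tsum_sub' (hsum_gs ▸ hZst) hgsu, hsum_gu, hsum_gs]
    rw [this, ENNReal.sub_div fun _ _ => hZu0]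
    exact tsub_le_tsub_right ENNReal.div_self_le_one _
  have hsum2 : (∑' Γ : Finset C, (gs Γ / Zs - gs Γ / Zu)) ≤ 1 - Zs / Zu := by
    have hfin : (∑' Γ : Finset C, gs Γ / Zu) ≠ ⊤ := by
      have : (∑' Γ : Finset C, gs Γ / Zu) = Zs / Zu := by
        simp_rw [div_eq_mul_inv]
        rw [ENNReal.tsum_mul_right, hsum_gs]
      rw [this]
      exact (hup.trans_lt ENNReal.one_lt_top).ne
    rw [PMaux.tsum_sub' hfin fun Γ => hdenom (gs Γ)]
    have h1 : (∑' Γ : Finset C, gs Γ / Zs) = Zs / Zs := by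
      simp_rw [div_eq_mul_inv]
      rw [ENNReal.tsum_mul_right, hsum_gs]
    have h2 : (∑' Γ : Finset C, gs Γ / Zu) = Zs / Zu := by
      simp_rw [div_eq_mul_inv]
      rw [ENNReal.tsum_mul_right, hsum_gs]
    rw [h1, h2]
    exact tsub_le_tsub_right ENNReal.div_self_le_one _
  have htot : (∑' Γ : Finset C, ((P.gibbs Set.univ Γ - P.gibbs Small Γ)
        + (P.gibbs Small Γ - P.gibbs Set.univ Γ)))
      ≤ (1 - Zs / Zu) + (1 - Zs / Zu) := by
    calc (∑' Γ : Finset C, ((P.gibbs Set.univ Γ - P.gibbs Small Γ)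
          + (P.gibbs Small Γ - P.gibbs Set.univ Γ)))
        ≤ ∑' Γ : Finset C, ((gu Γ - gs Γ) / Zu + (gs Γ / Zs - gs Γ / Zu)) :=
          ENNReal.tsum_le_tsum hterm
      _ = (∑' Γ : Finset C, (gu Γ - gs Γ) / Zu)
          + ∑' Γ : Finset C, (gs Γ / Zs - gs Γ / Zu) := ENNReal.tsum_add
      _ ≤ (1 - Zs / Zu) + (1 - Zs / Zu) := add_le_add hsum1 hsum2
  have hZZ : (1 : ℝ≥0∞) - ENNReal.ofReal ε ≤ Zs / Zu := by
    have hre : (1 : ℝ) - ε ≤ Real.exp (-ε) := by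
      have := Real.add_one_le_exp (-ε)
      linarith
    have := (ENNReal.ofReal_le_ofReal hre).trans hlow
    rwa [ENNReal.ofReal_sub _ hε0.le, ENNReal.ofReal_one] at this
  calc PolymerModel.dTV (P.gibbs Set.univ) (P.gibbs Small)
      ≤ ((1 - Zs / Zu) + (1 - Zs / Zu)) / 2 := ENNReal.div_le_div_right htot 2
    _ ≤ 1 - Zs / Zu := ENNReal.div_le_of_le_mul (by rw [mul_comm, two_mul])
    _ ≤ 1 - (1 - ENNReal.ofReal ε) := tsub_le_tsub_left hZZ 1
    _ ≤ ENNReal.ofReal ε := tsub_tsub_le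
end

section
/- Let P = (C, w, ≁) be a polymer model with finite partition function Z, let {Λ_i}_{i∈[m]} be a polymer clique cover of size m, and let |·| : C → ℝ_{>0} be a size function. Suppose there are a monotonically increasing invertible function g : ℝ → ℝ_{>0} and a bound B ∈ ℝ_{>0} such that for every i ∈ [m], ∑_{γ ∈ Λ_i} g(|γ|) w_γ ≤ B. Then for all ε ∈ (0,1) and all k ≥ g^{-1}(Bm/ε), it holds that e^{−ε} ≤ Z_{≤k}/Z ≤ 1 and d_TV(μ, μ_{≤k}) ≤ ε. -/
open scoped ENNReal Classical

namespace PolyAux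

open PolymerModel

variable {C : Type*} (P : PolymerModel C)

noncomputable def W (γ : C) : ℝ≥0∞ := ENNReal.ofReal (P.w γ)

noncomputable def pr (Γ : Finset C) : ℝ≥0∞ := ∏ γ ∈ Γ, W P γ

def famSet (B : Set C) : Set (Finset C) := {Γ | P.IsFamily Γ ∧ ↑Γ ⊆ B}

lemma Z_eq (B : Set C) :
    P.Z B = ∑' Γ : Finset C, (famSet P B).indicator (pr P) Γ :=
  tsum_subtype (famSet P B) (pr P)

lemma Z_mono {B B' : Set C} (h : B ⊆ B') : P.Z B ≤ P.Z B' := by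
  rw [Z_eq, Z_eq]
  refine ENNReal.tsum_le_tsum fun Γ => Set.indicator_le_indicator_of_subset
    (fun Γ (hΓ : Γ ∈ famSet P B) => show Γ ∈ famSet P B' from ⟨hΓ.1, hΓ.2.trans h⟩)
    (fun _ => zero_le) _

lemma one_le_Z (B : Set C) : 1 ≤ P.Z B := by
  have hmem : P.IsFamily (∅ : Finset C) ∧ ↑(∅ : Finset C) ⊆ B :=
    ⟨fun γ hγ => absurd hγ (Finset.notMem_empty γ), by simp⟩
  have h := ENNReal.le_tsum
    (f := fun Γ : {Γ : Finset C // P.IsFamily Γ ∧ ↑Γ ⊆ B} =>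
      ∏ γ ∈ Γ.1, ENNReal.ofReal (P.w γ)) ⟨∅, hmem⟩
  simp at h
  exact h

lemma Z_split (s : Set C) : P.Z Set.univ ≤ P.Z s * P.Z sᶜ := by
  classical
  have hfam : ∀ (Γ : Finset C), P.IsFamily Γ → ∀ (T : Finset C), T ⊆ Γ → P.IsFamily T :=
    fun Γ hΓ T hT γ hγ γ' hγ' => hΓ γ (hT hγ) γ' (hT hγ')
  let e : {Γ : Finset C // P.IsFamily Γ ∧ ↑Γ ⊆ (Set.univ : Set C)} →
      {Γ : Finset C // P.IsFamily Γ ∧ ↑Γ ⊆ s} × {Γ : Finset C // P.IsFamily Γ ∧ ↑Γ ⊆ sᶜ} :=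
    fun Γ =>
      (⟨Γ.1.filter (· ∈ s), hfam Γ.1 Γ.2.1 _ (Finset.filter_subset _ _), by
          intro γ hγ
          simp only [Finset.coe_filter, Set.mem_setOf_eq] at hγ
          exact hγ.2⟩,
       ⟨Γ.1.filter (· ∉ s), hfam Γ.1 Γ.2.1 _ (Finset.filter_subset _ _), by
          intro γ hγ
          simp only [Finset.coe_filter, Set.mem_setOf_eq] at hγ
          exact hγ.2⟩)
  have key : P.Z Set.univ ≤
      ∑' q : {Γ : Finset C // P.IsFamily Γ ∧ ↑Γ ⊆ s} ×
          {Γ : Finset C // P.IsFamily Γ ∧ ↑Γ ⊆ sᶜ},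
        (∏ γ ∈ q.1.1, ENNReal.ofReal (P.w γ)) * ∏ γ ∈ q.2.1, ENNReal.ofReal (P.w γ) := by
    refine Summable.tsum_le_tsum_of_inj e ?_ (fun _ _ => zero_le) ?_
      ENNReal.summable ENNReal.summable
    · intro Γ Γ' h
      simp only [e, Prod.mk.injEq, Subtype.mk.injEq] at h
      apply Subtype.ext
      rw [← Finset.filter_union_filter_not_eq (· ∈ s) Γ.1, h.1, h.2,
        Finset.filter_union_filter_not_eq]
    · intro Γ
      exact le_of_eq (Finset.prod_filter_mul_prod_filter_not Γ.1 (· ∈ s) _).symm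
  refine key.trans (le_of_eq ?_)
  rw [ENNReal.tsum_prod']
  simp_rw [ENNReal.tsum_mul_left, ENNReal.tsum_mul_right]
  rfl

lemma Z_le_exp (t : Set C) (S : ℝ) (hS : 0 ≤ S)
    (hsum : ∑' γ : t, ENNReal.ofReal (P.w γ) ≤ ENNReal.ofReal S) :
    P.Z t ≤ ENNReal.ofReal (Real.exp S) := by
  rw [PolymerModel.Z, ENNReal.tsum_eq_iSup_sum]
  refine iSup_le fun F => ?_
  set A : Finset C := F.sup (fun Γ => Γ.1) with hA
  have hAt : ∀ γ ∈ A, γ ∈ t := by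
    intro γ hγ
    rcases Finset.mem_sup.1 hγ with ⟨Γ, _, hγΓ⟩
    exact Γ.2.2 hγΓ
  have hsumA : ∑ γ ∈ A, P.w γ ≤ S := by
    have h1 : ENNReal.ofReal (∑ γ ∈ A, P.w γ) = ∑ γ ∈ A, ENNReal.ofReal (P.w γ) :=
      ENNReal.ofReal_sum_of_nonneg fun γ _ => (P.w_pos γ).le
    have h2 : ∑ γ ∈ A, ENNReal.ofReal (P.w γ) ≤ ∑' γ : t, ENNReal.ofReal (P.w γ) :=
      calc ∑ γ ∈ A, ENNReal.ofReal (P.w γ)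
          = ∑ γ ∈ A, t.indicator (fun γ => ENNReal.ofReal (P.w γ)) γ := by
            refine Finset.sum_congr rfl fun γ hγ => ?_
            rw [Set.indicator_of_mem (hAt γ hγ)]
        _ ≤ ∑' γ : C, t.indicator (fun γ => ENNReal.ofReal (P.w γ)) γ :=
            ENNReal.sum_le_tsum A
        _ = ∑' γ : t, ENNReal.ofReal (P.w γ) :=
            (tsum_subtype t fun γ => ENNReal.ofReal (P.w γ)).symm
    have h3 := h2.trans hsum
    rw [← h1] at h3
    exact (ENNReal.ofReal_le_ofReal_iff hS).1 h3
  calc ∑ Γ ∈ F, ∏ γ ∈ Γ.1, ENNReal.ofReal (P.w γ)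
      = ∑ T ∈ F.image Subtype.val, ∏ γ ∈ T, ENNReal.ofReal (P.w γ) := by
        rw [Finset.sum_image fun x _ y _ h => Subtype.ext h]
    _ ≤ ∑ T ∈ A.powerset, ∏ γ ∈ T, ENNReal.ofReal (P.w γ) := by
        refine Finset.sum_le_sum_of_subset fun T hT => ?_
        rcases Finset.mem_image.1 hT with ⟨Γ, hΓ, rfl⟩
        exact Finset.mem_powerset.2 (Finset.le_sup hΓ)
    _ = ∏ γ ∈ A, (ENNReal.ofReal (P.w γ) + 1) := by
        rw [Finset.prod_add]
        simp
    _ ≤ ∏ γ ∈ A, ENNReal.ofReal (Real.exp (P.w γ)) := by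
        refine Finset.prod_le_prod' fun γ _ => ?_
        rw [← ENNReal.ofReal_one, ← ENNReal.ofReal_add (P.w_pos γ).le zero_le_one]
        exact ENNReal.ofReal_le_ofReal (Real.add_one_le_exp _)
    _ = ENNReal.ofReal (Real.exp (∑ γ ∈ A, P.w γ)) := by
        rw [← ENNReal.ofReal_prod_of_nonneg fun γ _ => (Real.exp_pos _).le, Real.exp_sum]
    _ ≤ ENNReal.ofReal (Real.exp S) :=
        ENNReal.ofReal_le_ofReal (Real.exp_le_exp.2 hsumA)


lemma tsum_sub' {ι : Type*} {f g : ι → ℝ≥0∞} (h₁ : ∑' i, g i ≠ ∞) (h₂ : ∀ i, g i ≤ f i) :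
    ∑' i, (f i - g i) = ∑' i, f i - ∑' i, g i := by
  have key : ∑' i, (f i - g i) + ∑' i, g i = ∑' i, f i := by
    rw [← ENNReal.tsum_add]
    exact tsum_congr fun i => tsub_add_cancel_of_le (h₂ i)
  exact ENNReal.eq_sub_of_add_eq h₁ key

end PolyAux

/-- If every clique of a clique cover satisfies the clique truncation
condition for a monotonically increasing invertible `g : ℝ → ℝ_{>0}` and bound `B > 0`,
then for all `ε ∈ (0,1)` and all `k ≥ g⁻¹(Bm/ε)`:
`e^{−ε} ≤ Z_{≤k}/Z ≤ 1` and `d_TV(μ, μ_{≤k}) ≤ ε`. -/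
theorem model_truncation_via_clique_truncation {C : Type*} [Countable C]
    (P : PolymerModel C) (hZfin : P.Z Set.univ ≠ ⊤)
    {m : ℕ} (hm : 0 < m) (Λ : Fin m → Set C)
    (hclique : ∀ i, P.IsClique (Λ i)) (hcover : (⋃ i, Λ i) = Set.univ)
    (size : C → ℝ) (hsize : ∀ γ, 0 < size γ)
    (g : ℝ → ℝ) (hgpos : ∀ x, 0 < g x) (hgmono : StrictMono g)
    (ginv : ℝ → ℝ) (hginv_left : ∀ x : ℝ, ginv (g x) = x)
    (hginv_right : ∀ y : ℝ, 0 < y → g (ginv y) = y)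
    (B : ℝ) (hB : 0 < B)
    (hctc : ∀ i : Fin m,
      ∑' γ : Λ i, ENNReal.ofReal (g (size γ) * P.w γ) ≤ ENNReal.ofReal B)
    (ε : ℝ) (hε : ε ∈ Set.Ioo (0 : ℝ) 1) (k : ℝ) (hk : ginv (B * m / ε) ≤ k) :
    (ENNReal.ofReal (Real.exp (-ε)) ≤ P.Z {γ | size γ ≤ k} / P.Z Set.univ ∧
        P.Z {γ | size γ ≤ k} / P.Z Set.univ ≤ 1) ∧
      PolymerModel.dTV (P.gibbs Set.univ) (P.gibbs {γ | size γ ≤ k})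
        ≤ ENNReal.ofReal ε := by
  classical
  obtain ⟨hε0, hε1⟩ := hε
  set small : Set C := {γ | size γ ≤ k} with hsmall
  have hmR : (0:ℝ) < m := Nat.cast_pos.mpr hm
  have hBm : (0:ℝ) < B * m := by positivity
  have hc : (0:ℝ) < ε / (B * m) := by positivity
  have hgk : B * m / ε ≤ g k := by
    have h1 : g (ginv (B * m / ε)) ≤ g k := hgmono.monotone hk
    rwa [hginv_right _ (by positivity)] at h1
  have hwle : ∀ γ : C, γ ∈ smallᶜ →
      ENNReal.ofReal (P.w γ) ≤
        ENNReal.ofReal (ε / (B * m)) * ENNReal.ofReal (g (size γ) * P.w γ) := by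
    intro γ hγ
    have hks : k < size γ := lt_of_not_ge (by simpa [hsmall] using hγ)
    have hgγ : B * m / ε ≤ g (size γ) := hgk.trans (hgmono hks).le
    rw [← ENNReal.ofReal_mul hc.le]
    apply ENNReal.ofReal_le_ofReal
    have hBme : B * m ≤ g (size γ) * ε := (div_le_iff₀ hε0).1 hgγ
    have h1 : 1 ≤ ε / (B * m) * g (size γ) := by
      rw [div_mul_eq_mul_div, le_div_iff₀ hBm, one_mul]
      nlinarith
    calc P.w γ = 1 * P.w γ := (one_mul _).symm
      _ ≤ ε / (B * m) * g (size γ) * P.w γ :=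
          mul_le_mul_of_nonneg_right h1 (P.w_pos γ).le
      _ = ε / (B * m) * (g (size γ) * P.w γ) := by ring
  have hsum_big : ∑' γ : (smallᶜ : Set C), ENNReal.ofReal (P.w γ) ≤ ENNReal.ofReal ε := by
    set f : C → ℝ≥0∞ := fun γ => ENNReal.ofReal (g (size γ) * P.w γ) with hf
    have step1 : ∑' γ : (smallᶜ : Set C), ENNReal.ofReal (P.w γ)
        ≤ ENNReal.ofReal (ε / (B * m)) * ∑' γ : (smallᶜ : Set C), f γ := by
      rw [← ENNReal.tsum_mul_left]
      exact ENNReal.tsum_le_tsum fun γ => hwle γ γ.2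
    have step2 : ∑' γ : (smallᶜ : Set C), f γ ≤ (m : ℝ≥0∞) * ENNReal.ofReal B := by
      calc ∑' γ : (smallᶜ : Set C), f γ
          = ∑' γ : C, (smallᶜ : Set C).indicator f γ := tsum_subtype _ _
        _ ≤ ∑' γ : C, ∑ i : Fin m, (Λ i).indicator f γ := by
            refine ENNReal.tsum_le_tsum fun γ => ?_
            by_cases hγ : γ ∈ (smallᶜ : Set C)
            · have hmem : γ ∈ ⋃ i, Λ i := by rw [hcover]; trivial
              rcases Set.mem_iUnion.1 hmem with ⟨i, hi⟩
              rw [Set.indicator_of_mem hγ]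
              calc f γ = (Λ i).indicator f γ := (Set.indicator_of_mem hi f).symm
                _ ≤ ∑ j : Fin m, (Λ j).indicator f γ :=
                    Finset.single_le_sum (f := fun j => (Λ j).indicator f γ)
                      (fun j _ => zero_le) (Finset.mem_univ i)
            · rw [Set.indicator_of_notMem hγ]; exact zero_le
        _ = ∑ i : Fin m, ∑' γ : C, (Λ i).indicator f γ :=
            Summable.tsum_finsetSum fun i _ => ENNReal.summable
        _ = ∑ i : Fin m, ∑' γ : (Λ i), f γ :=
            Finset.sum_congr rfl fun i _ => (tsum_subtype _ _).symm
        _ ≤ ∑ i : Fin m, ENNReal.ofReal B := Finset.sum_le_sum fun i _ => hctc i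
        _ = (m : ℝ≥0∞) * ENNReal.ofReal B := by
            rw [Finset.sum_const, Finset.card_univ, Fintype.card_fin, nsmul_eq_mul]
    calc ∑' γ : (smallᶜ : Set C), ENNReal.ofReal (P.w γ)
        ≤ ENNReal.ofReal (ε / (B * m)) * ((m : ℝ≥0∞) * ENNReal.ofReal B) :=
          step1.trans (mul_le_mul_right step2 _)
      _ = ENNReal.ofReal (ε / (B * m) * ((m : ℝ) * B)) := by
          rw [ENNReal.ofReal_mul hc.le,
            ENNReal.ofReal_mul (by positivity : (0:ℝ) ≤ (m:ℝ)), ENNReal.ofReal_natCast]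
      _ = ENNReal.ofReal ε := by
          congr 1
          rw [div_mul_eq_mul_div, mul_div_assoc, mul_comm (m : ℝ) B,
            div_self hBm.ne', mul_one]
  have hZs_le : P.Z small ≤ P.Z Set.univ := PolyAux.Z_mono P (Set.subset_univ _)
  have hZs_netop : P.Z small ≠ ⊤ := fun h => hZfin (top_le_iff.1 (h ▸ hZs_le))
  have hZs_ne0 : P.Z small ≠ 0 := fun h => by simpa [h] using PolyAux.one_le_Z P small
  have hZu_ne0 : P.Z Set.univ ≠ 0 := fun h => by simpa [h] using PolyAux.one_le_Z P Set.univ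
  have hmain : P.Z Set.univ ≤ P.Z small * ENNReal.ofReal (Real.exp ε) :=
    (PolyAux.Z_split P small).trans
      (mul_le_mul_right (PolyAux.Z_le_exp P smallᶜ ε hε0.le hsum_big) _)
  have hlow : ENNReal.ofReal (Real.exp (-ε)) ≤ P.Z small / P.Z Set.univ := by
    rw [ENNReal.le_div_iff_mul_le (Or.inl hZu_ne0) (Or.inl hZfin)]
    calc ENNReal.ofReal (Real.exp (-ε)) * P.Z Set.univ
        ≤ ENNReal.ofReal (Real.exp (-ε)) * (P.Z small * ENNReal.ofReal (Real.exp ε)) :=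
          mul_le_mul_right hmain _
      _ = P.Z small * (ENNReal.ofReal (Real.exp (-ε)) * ENNReal.ofReal (Real.exp ε)) := by
          ring
      _ = P.Z small := by
          rw [← ENNReal.ofReal_mul (Real.exp_pos _).le, ← Real.exp_add, neg_add_cancel,
            Real.exp_zero, ENNReal.ofReal_one, mul_one]
  have hup : P.Z small / P.Z Set.univ ≤ 1 :=
    ENNReal.div_le_of_le_mul (by rw [one_mul]; exact hZs_le)
  refine ⟨⟨hlow, hup⟩, ?_⟩
  -- dTV part
  set Zu := P.Z Set.univ with hZu
  set Zs := P.Z small with hZs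
  set p : Finset C → ℝ≥0∞ := PolyAux.pr P with hp
  set S1 : Set (Finset C) := {Γ | P.IsFamily Γ ∧ ¬(↑Γ ⊆ small)} with hS1
  have hle_inv : Zu⁻¹ ≤ Zs⁻¹ := ENNReal.inv_le_inv' hZs_le
  have hμ_eq : ∀ Γ : Finset C, P.gibbs Set.univ Γ =
      if P.IsFamily Γ then p Γ * Zu⁻¹ else 0 := by
    intro Γ
    rw [PolymerModel.gibbs]
    simp [Set.subset_univ, div_eq_mul_inv, hp, PolyAux.pr, PolyAux.W]
    rfl
  have hν_eq : ∀ Γ : Finset C, P.gibbs small Γ =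
      if P.IsFamily Γ ∧ ↑Γ ⊆ small then p Γ * Zs⁻¹ else 0 := by
    intro Γ
    rw [PolymerModel.gibbs]
    simp [div_eq_mul_inv, hp, PolyAux.pr, PolyAux.W]
    rfl
  have hf1 : ∀ Γ : Finset C, P.gibbs Set.univ Γ - P.gibbs small Γ =
      S1.indicator (fun Γ => p Γ * Zu⁻¹) Γ := by
    intro Γ
    rw [hμ_eq, hν_eq]
    by_cases hfam : P.IsFamily Γ
    · by_cases hsub : (↑Γ : Set C) ⊆ small
      · have hmem : Γ ∉ S1 := fun h => h.2 hsub
        rw [Set.indicator_of_notMem hmem, if_pos hfam, if_pos ⟨hfam, hsub⟩]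
        exact tsub_eq_zero_of_le (mul_le_mul_right hle_inv _)
      · rw [Set.indicator_of_mem (show Γ ∈ S1 from ⟨hfam, hsub⟩), if_pos hfam,
          if_neg (fun h => hsub h.2), tsub_zero]
    · rw [Set.indicator_of_notMem (fun h => hfam h.1), if_neg hfam,
        if_neg (fun h => hfam h.1), zero_tsub]
  have hf2 : ∀ Γ : Finset C, P.gibbs small Γ - P.gibbs Set.univ Γ =
      (PolyAux.famSet P small).indicator (fun Γ => p Γ * Zs⁻¹) Γ -
        (PolyAux.famSet P small).indicator (fun Γ => p Γ * Zu⁻¹) Γ := by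
    intro Γ
    rw [hμ_eq, hν_eq]
    by_cases hfam : P.IsFamily Γ
    · by_cases hsub : (↑Γ : Set C) ⊆ small
      · have hmem : Γ ∈ PolyAux.famSet P small := ⟨hfam, hsub⟩
        rw [Set.indicator_of_mem hmem, Set.indicator_of_mem hmem,
          if_pos ⟨hfam, hsub⟩, if_pos hfam]
      · have hmem : Γ ∉ PolyAux.famSet P small := fun h => hsub h.2
        rw [Set.indicator_of_notMem hmem, Set.indicator_of_notMem hmem,
          if_neg (fun h => hsub h.2), if_pos hfam, zero_tsub, tsub_self]
    · have hmem : Γ ∉ PolyAux.famSet P small := fun h => hfam h.1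
      rw [Set.indicator_of_notMem hmem, Set.indicator_of_notMem hmem,
        if_neg hfam, if_neg (fun h => hfam h.1), tsub_self]
  -- sum formulas
  have hZs_ind : Zs = ∑' Γ : Finset C, (PolyAux.famSet P small).indicator p Γ :=
    PolyAux.Z_eq P small
  have hsplit : Zu = Zs + ∑' Γ : Finset C, S1.indicator p Γ := by
    rw [hZu, PolyAux.Z_eq P Set.univ, hZs_ind, ← ENNReal.tsum_add]
    refine tsum_congr fun Γ => ?_
    by_cases hfam : P.IsFamily Γ
    · by_cases hsub : (↑Γ : Set C) ⊆ small
      · rw [Set.indicator_of_mem (show Γ ∈ PolyAux.famSet P Set.univ from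
            ⟨hfam, Set.subset_univ _⟩),
          Set.indicator_of_mem (show Γ ∈ PolyAux.famSet P small from ⟨hfam, hsub⟩),
          Set.indicator_of_notMem (show Γ ∉ S1 from fun h => h.2 hsub), add_zero]
      · rw [Set.indicator_of_mem (show Γ ∈ PolyAux.famSet P Set.univ from
            ⟨hfam, Set.subset_univ _⟩),
          Set.indicator_of_notMem (show Γ ∉ PolyAux.famSet P small from fun h => hsub h.2),
          Set.indicator_of_mem (show Γ ∈ S1 from ⟨hfam, hsub⟩), zero_add]
    · rw [Set.indicator_of_notMem (show Γ ∉ PolyAux.famSet P Set.univ from fun h => hfam h.1),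
        Set.indicator_of_notMem (show Γ ∉ PolyAux.famSet P small from fun h => hfam h.1),
        Set.indicator_of_notMem (show Γ ∉ S1 from fun h => hfam h.1), add_zero]
  have hN1sum : ∑' Γ : Finset C, S1.indicator p Γ = Zu - Zs :=
    ENNReal.eq_sub_of_add_eq hZs_netop (by rw [add_comm]; exact hsplit.symm)
  have hind_mul : ∀ (s : Set (Finset C)) (c : ℝ≥0∞) (Γ : Finset C),
      s.indicator (fun Γ => p Γ * c) Γ = s.indicator p Γ * c := by
    intro s c Γ
    by_cases h : Γ ∈ s
    · rw [Set.indicator_of_mem h, Set.indicator_of_mem h]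
    · rw [Set.indicator_of_notMem h, Set.indicator_of_notMem h, zero_mul]
  have hN1 : ∑' Γ : Finset C, (P.gibbs Set.univ Γ - P.gibbs small Γ) = 1 - Zs * Zu⁻¹ := by
    calc ∑' Γ : Finset C, (P.gibbs Set.univ Γ - P.gibbs small Γ)
        = ∑' Γ : Finset C, S1.indicator (fun Γ => p Γ * Zu⁻¹) Γ := tsum_congr hf1
      _ = ∑' Γ : Finset C, S1.indicator p Γ * Zu⁻¹ := tsum_congr (hind_mul S1 Zu⁻¹)
      _ = (Zu - Zs) * Zu⁻¹ := by rw [ENNReal.tsum_mul_right, hN1sum]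
      _ = Zu * Zu⁻¹ - Zs * Zu⁻¹ :=
          ENNReal.sub_mul fun _ _ => ENNReal.inv_ne_top.2 hZu_ne0
      _ = 1 - Zs * Zu⁻¹ := by rw [ENNReal.mul_inv_cancel hZu_ne0 hZfin]
  have hsum_small_u : ∑' Γ : Finset C,
      (PolyAux.famSet P small).indicator (fun Γ => p Γ * Zu⁻¹) Γ = Zs * Zu⁻¹ := by
    calc ∑' Γ : Finset C, (PolyAux.famSet P small).indicator (fun Γ => p Γ * Zu⁻¹) Γ
        = ∑' Γ : Finset C, (PolyAux.famSet P small).indicator p Γ * Zu⁻¹ :=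
          tsum_congr (hind_mul _ _)
      _ = Zs * Zu⁻¹ := by rw [ENNReal.tsum_mul_right, ← hZs_ind]
  have hsum_small_s : ∑' Γ : Finset C,
      (PolyAux.famSet P small).indicator (fun Γ => p Γ * Zs⁻¹) Γ = 1 := by
    calc ∑' Γ : Finset C, (PolyAux.famSet P small).indicator (fun Γ => p Γ * Zs⁻¹) Γ
        = ∑' Γ : Finset C, (PolyAux.famSet P small).indicator p Γ * Zs⁻¹ :=
          tsum_congr (hind_mul _ _)
      _ = Zs * Zs⁻¹ := by rw [ENNReal.tsum_mul_right, ← hZs_ind]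
      _ = 1 := ENNReal.mul_inv_cancel hZs_ne0 hZs_netop
  have hN2 : ∑' Γ : Finset C, (P.gibbs small Γ - P.gibbs Set.univ Γ) = 1 - Zs * Zu⁻¹ := by
    calc ∑' Γ : Finset C, (P.gibbs small Γ - P.gibbs Set.univ Γ)
        = ∑' Γ : Finset C,
            ((PolyAux.famSet P small).indicator (fun Γ => p Γ * Zs⁻¹) Γ -
              (PolyAux.famSet P small).indicator (fun Γ => p Γ * Zu⁻¹) Γ) :=
          tsum_congr hf2
      _ = (∑' Γ : Finset C, (PolyAux.famSet P small).indicator (fun Γ => p Γ * Zs⁻¹) Γ) -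
            ∑' Γ : Finset C, (PolyAux.famSet P small).indicator (fun Γ => p Γ * Zu⁻¹) Γ := by
          refine PolyAux.tsum_sub' ?_ ?_
          · rw [hsum_small_u]
            exact ENNReal.mul_ne_top hZs_netop (ENNReal.inv_ne_top.2 hZu_ne0)
          · intro Γ
            by_cases h : Γ ∈ PolyAux.famSet P small
            · rw [Set.indicator_of_mem h, Set.indicator_of_mem h]
              exact mul_le_mul_right hle_inv _
            · rw [Set.indicator_of_notMem h, Set.indicator_of_notMem h]
      _ = 1 - Zs * Zu⁻¹ := by rw [hsum_small_u, hsum_small_s]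
  -- assemble
  rw [PolymerModel.dTV]
  have htot : ∑' Γ : Finset C,
      ((P.gibbs Set.univ Γ - P.gibbs small Γ) + (P.gibbs small Γ - P.gibbs Set.univ Γ))
      = (1 - Zs * Zu⁻¹) * 2 := by
    rw [ENNReal.tsum_add, hN1, hN2, mul_two]
  rw [htot, mul_div_assoc, ENNReal.div_self (by norm_num) (by norm_num), mul_one]
  calc 1 - Zs * Zu⁻¹ ≤ 1 - ENNReal.ofReal (Real.exp (-ε)) := by
        refine tsub_le_tsub_left ?_ 1
        rw [← div_eq_mul_inv] at *
        exact hlow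
    _ = ENNReal.ofReal (1 - Real.exp (-ε)) := by
        rw [ENNReal.ofReal_sub _ (Real.exp_pos _).le, ENNReal.ofReal_one]
    _ ≤ ENNReal.ofReal ε := by
        refine ENNReal.ofReal_le_ofReal ?_
        nlinarith [Real.add_one_le_exp (-ε)]
end

section
/- Let P = (C, w, ≁) be a polymer model with finite partition function, and let {Λ_i}_{i∈[m]} be a polymer clique cover of size m. Then for every subset B ⊆ C, Z_B ≤ ∏_{i∈[m]} (1 + ∑_{γ ∈ B ∩ Λ_i} w_γ). -/
open scoped ENNReal Classical

/-- Sum over an `Option` type in `ℝ≥0∞`. -/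
lemma tsum_option_ennreal {α : Type*} (f : Option α → ℝ≥0∞) :
    ∑' o : Option α, f o = f none + ∑' a : α, f (some a) := by
  have huniv : (Set.univ : Set (Option α)) = {none} ∪ Set.range some := by
    ext o; cases o <;> simp
  rw [← tsum_univ f, huniv,
    Summable.tsum_union_disjoint (f := f) (by simp [Set.disjoint_left]) ENNReal.summable
      ENNReal.summable,
    tsum_singleton, tsum_range f (Option.some_injective α)]

/-- A sum over a finite pi type of a product equals the product of the sums, in `ℝ≥0∞`. -/
lemma tsum_pi_prod_ennreal {α : Type*} : ∀ (m : ℕ) (g : Fin m → α → ℝ≥0∞),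
    ∑' f : Fin m → α, ∏ i, g i (f i) = ∏ i, ∑' a, g i a := by
  intro m
  induction m with
  | zero =>
    intro g
    simp only [Finset.univ_eq_empty, Finset.prod_empty]
    exact tsum_eq_single default (fun b' hb' => absurd (Subsingleton.elim b' default) hb')
  | succ n ih =>
    intro g
    rw [← (Fin.consEquiv (fun _ : Fin (n + 1) => α)).tsum_eq (fun f => ∏ i, g i (f i))]
    have hterm : ∀ p : α × (Fin n → α),
        (fun f => ∏ i, g i (f i)) ((Fin.consEquiv (fun _ : Fin (n + 1) => α)) p)
          = g 0 p.1 * ∏ i : Fin n, g i.succ (p.2 i) := by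
      intro p
      simp [Fin.consEquiv, Fin.prod_univ_succ]
    simp_rw [hterm]
    rw [ENNReal.tsum_prod']
    simp_rw [ENNReal.tsum_mul_left, ih (fun i a => g i.succ a), ENNReal.tsum_mul_right]
    rw [Fin.prod_univ_succ]

/-- For a polymer clique cover `{Λ_i}` of size `m` and any `B ⊆ C`,
`Z_B ≤ ∏_{i∈[m]} (1 + ∑_{γ ∈ B ∩ Λ_i} w_γ)`. -/
theorem restricted_partition_function_le_prod {C : Type*} [Countable C]
    (P : PolymerModel C) (hZfin : P.Z Set.univ ≠ ⊤)
    {m : ℕ} (Λ : Fin m → Set C)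
    (hclique : ∀ i, P.IsClique (Λ i)) (hcover : (⋃ i, Λ i) = Set.univ)
    (B : Set C) :
    P.Z B ≤ ∏ i : Fin m, (1 + ∑' γ : ↥(B ∩ Λ i), ENNReal.ofReal (P.w γ)) := by
  classical
  -- choose for each polymer a clique containing it
  have hex : ∀ γ : C, ∃ i, γ ∈ Λ i := by
    intro γ
    have : γ ∈ ⋃ i, Λ i := hcover ▸ Set.mem_univ γ
    simpa [Set.mem_iUnion] using this
  choose idx hidx using hex
  -- the weight function on `Fin m → Option C`
  set T : Fin m → Option C → ℝ≥0∞ := fun i o =>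
    Option.elim o 1 (fun γ => if γ ∈ B ∩ Λ i then ENNReal.ofReal (P.w γ) else 0) with hT
  -- the right-hand side equals a big tsum
  have hRHS : ∏ i : Fin m, (1 + ∑' γ : ↥(B ∩ Λ i), ENNReal.ofReal (P.w γ))
      = ∑' f : Fin m → Option C, ∏ i, T i (f i) := by
    rw [tsum_pi_prod_ennreal m T]
    refine Finset.prod_congr rfl fun i _ => ?_
    have h2 : ∑' a : C, T i (some a) = ∑' γ : ↥(B ∩ Λ i), ENNReal.ofReal (P.w γ) := by
      rw [tsum_subtype (B ∩ Λ i) (fun γ => ENNReal.ofReal (P.w γ))]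
      refine tsum_congr fun γ => ?_
      simp [hT, Set.indicator_apply]
    rw [tsum_option_ennreal (T i), h2]
    rfl
  -- injectivity of idx on families
  have hinj : ∀ (Γ : Finset C), P.IsFamily Γ → ∀ γ ∈ Γ, ∀ γ' ∈ Γ, idx γ = idx γ' → γ = γ' := by
    intro Γ hfam γ hγ γ' hγ' hii
    by_contra hne
    exact hfam γ hγ γ' hγ' hne
      (hclique (idx γ) γ (hidx γ) γ' (hii ▸ hidx γ'))
  -- the map from families to functions
  set Φ : {Γ : Finset C // P.IsFamily Γ ∧ ↑Γ ⊆ B} → (Fin m → Option C) := fun Γ i =>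
    if h : ∃ γ ∈ Γ.1, idx γ = i then some h.choose else none with hΦ
  -- recovery lemma
  have hrec : ∀ (Γ : {Γ : Finset C // P.IsFamily Γ ∧ ↑Γ ⊆ B}) (γ : C),
      γ ∈ Γ.1 ↔ Φ Γ (idx γ) = some γ := by
    intro Γ γ
    constructor
    · intro hγ
      have h : ∃ γ' ∈ Γ.1, idx γ' = idx γ := ⟨γ, hγ, rfl⟩
      have hc := h.choose_spec
      have : h.choose = γ := hinj Γ.1 Γ.2.1 h.choose hc.1 γ hγ hc.2
      simp [hΦ, dif_pos h, this]
    · intro h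
      by_cases hex' : ∃ γ' ∈ Γ.1, idx γ' = idx γ
      · have : Φ Γ (idx γ) = some hex'.choose := by simp [hΦ, dif_pos hex']
        rw [this] at h
        exact (Option.some_injective C h) ▸ hex'.choose_spec.1
      · simp [hΦ, dif_neg hex'] at h
  -- injectivity of Φ
  have hΦinj : Function.Injective Φ := by
    intro Γ Γ' h
    ext1
    ext γ
    rw [hrec Γ γ, hrec Γ' γ, h]
  -- weight preservation
  have hweight : ∀ Γ : {Γ : Finset C // P.IsFamily Γ ∧ ↑Γ ⊆ B},
      ∏ i, T i (Φ Γ i) = ∏ γ ∈ Γ.1, ENNReal.ofReal (P.w γ) := by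
    intro Γ
    have hsub : Γ.1.image idx ⊆ Finset.univ := Finset.subset_univ _
    rw [← Finset.prod_subset hsub ?_]
    · rw [Finset.prod_image ?_]
      · refine Finset.prod_congr rfl fun γ hγ => ?_
        have : Φ Γ (idx γ) = some γ := (hrec Γ γ).1 hγ
        rw [this]
        have hB : γ ∈ B := Γ.2.2 hγ
        simp [hT, hB, hidx γ]
      · intro γ hγ γ' hγ' hii
        exact hinj Γ.1 Γ.2.1 γ hγ γ' hγ' hii
    · intro i _ hi
      have hno : ¬ ∃ γ ∈ Γ.1, idx γ = i := by
        intro ⟨γ, hγ, hiγ⟩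
        exact hi (Finset.mem_image.2 ⟨γ, hγ, hiγ⟩)
      simp [hΦ, dif_neg hno, hT]
  -- conclude
  calc P.Z B = ∑' Γ : {Γ : Finset C // P.IsFamily Γ ∧ ↑Γ ⊆ B},
        (fun f : Fin m → Option C => ∏ i, T i (f i)) (Φ Γ) := by
        refine tsum_congr fun Γ => ?_
        exact (hweight Γ).symm
    _ ≤ ∑' f : Fin m → Option C, ∏ i, T i (f i) :=
        ENNReal.tsum_comp_le_tsum_of_injective hΦinj _
    _ = _ := hRHS.symm
end

section
/- Let P = (C, w, ≁) be a polymer model with finite partition function, let {Λ_i}_{i∈[m]} be a polymer clique cover of size m, and define U_0 = ∅ and U_i = U_{i-1} ∪ Λ_i for i ∈ [m]. Then for every i ∈ [m], Z_{U_{i-1}} ≤ Z_{U_i} ≤ Z_{U_{i-1}} · Z_{Λ_i}; in particular, with ρ_i = Z_{U_{i-1}}/Z_{U_i}, it holds that 1/Z_{Λ_i} ≤ ρ_i ≤ 1. -/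
open scoped ENNReal Classical

namespace PolymerModel

variable {C : Type*}

lemma Z_eq_tsum_indicator (P : PolymerModel C) (B : Set C) :
    P.Z B = ∑' Γ : Finset C,
      Set.indicator {Γ : Finset C | P.IsFamily Γ ∧ ↑Γ ⊆ B}
        (fun Γ => ∏ γ ∈ Γ, ENNReal.ofReal (P.w γ)) Γ := by
  rw [Z, ← tsum_subtype]
  rfl

lemma one_le_Z (P : PolymerModel C) (B : Set C) : 1 ≤ P.Z B := by
  have h : P.IsFamily (∅ : Finset C) ∧ ↑(∅ : Finset C) ⊆ B := by
    constructor
    · intro γ hγ; simp at hγ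
    · simp
  have := ENNReal.le_tsum (f := fun Γ : {Γ : Finset C // P.IsFamily Γ ∧ ↑Γ ⊆ B} =>
    ∏ γ ∈ Γ.1, ENNReal.ofReal (P.w γ)) ⟨∅, h⟩
  simpa [Z] using this

lemma Z_ne_zero (P : PolymerModel C) (B : Set C) : P.Z B ≠ 0 := by
  intro h
  have := P.one_le_Z B
  rw [h] at this
  exact (not_le.mpr zero_lt_one) this

lemma Z_mono (P : PolymerModel C) {A B : Set C} (h : A ⊆ B) : P.Z A ≤ P.Z B := by
  rw [Z_eq_tsum_indicator, Z_eq_tsum_indicator]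
  refine ENNReal.tsum_le_tsum fun Γ => ?_
  refine Set.indicator_le_indicator_of_subset ?_ (fun _ => zero_le) Γ
  intro Γ hΓ
  exact ⟨hΓ.1, hΓ.2.trans h⟩

lemma Z_union_le (P : PolymerModel C) (A B : Set C) : P.Z (A ∪ B) ≤ P.Z A * P.Z B := by
  classical
  have hprod : P.Z A * P.Z B =
      ∑' p : {Γ : Finset C // P.IsFamily Γ ∧ ↑Γ ⊆ A} ×
             {Γ : Finset C // P.IsFamily Γ ∧ ↑Γ ⊆ B},
        (∏ γ ∈ p.1.1, ENNReal.ofReal (P.w γ)) * ∏ γ ∈ p.2.1, ENNReal.ofReal (P.w γ) := by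
    rw [ENNReal.tsum_prod (f := fun (a : {Γ : Finset C // P.IsFamily Γ ∧ ↑Γ ⊆ A})
        (b : {Γ : Finset C // P.IsFamily Γ ∧ ↑Γ ⊆ B}) =>
        (∏ γ ∈ a.1, ENNReal.ofReal (P.w γ)) * ∏ γ ∈ b.1, ENNReal.ofReal (P.w γ))]
    simp_rw [ENNReal.tsum_mul_left]
    rw [ENNReal.tsum_mul_right]
    rfl
  rw [hprod, Z]
  set i : {Γ : Finset C // P.IsFamily Γ ∧ ↑Γ ⊆ A ∪ B} →
      {Γ : Finset C // P.IsFamily Γ ∧ ↑Γ ⊆ A} ×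
      {Γ : Finset C // P.IsFamily Γ ∧ ↑Γ ⊆ B} := fun Γ =>
    (⟨Γ.1.filter (· ∈ A), by
        refine ⟨fun γ hγ γ' hγ' hne => Γ.2.1 γ (Finset.mem_filter.mp hγ).1 γ'
          (Finset.mem_filter.mp hγ').1 hne, ?_⟩
        intro γ hγ
        simp only [Finset.coe_filter, Set.mem_setOf_eq] at hγ
        exact hγ.2⟩,
     ⟨Γ.1.filter (· ∉ A), by
        refine ⟨fun γ hγ γ' hγ' hne => Γ.2.1 γ (Finset.mem_filter.mp hγ).1 γ'
          (Finset.mem_filter.mp hγ').1 hne, ?_⟩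
        intro γ hγ
        simp only [Finset.coe_filter, Set.mem_setOf_eq] at hγ
        rcases Γ.2.2 hγ.1 with h | h
        · exact absurd h hγ.2
        · exact h⟩) with hi
  refine ENNReal.summable.tsum_le_tsum_of_inj i ?_ (fun _ _ => zero_le) ?_
    ENNReal.summable
  · intro Γ Γ' hEq
    have h1 : Γ.1.filter (· ∈ A) = Γ'.1.filter (· ∈ A) :=
      congrArg (fun p => (Prod.fst p).1) hEq
    have h2 : Γ.1.filter (· ∉ A) = Γ'.1.filter (· ∉ A) :=
      congrArg (fun p => (Prod.snd p).1) hEq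
    have : Γ.1 = Γ'.1 := by
      rw [← Finset.filter_union_filter_not_eq (· ∈ A) Γ.1,
        ← Finset.filter_union_filter_not_eq (· ∈ A) Γ'.1, h1, h2]
    exact Subtype.ext this
  · intro Γ
    simp only [hi]
    rw [← Finset.prod_filter_mul_prod_filter_not Γ.1 (· ∈ A)]

end PolymerModel

/-- With `U_0 = ∅` and `U_i = U_{i-1} ∪ Λ_i`, for every `i ∈ [m]`:
`Z_{U_{i-1}} ≤ Z_{U_i} ≤ Z_{U_{i-1}} · Z_{Λ_i}`, and with `ρ_i = Z_{U_{i-1}}/Z_{U_i}`,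
`1/Z_{Λ_i} ≤ ρ_i ≤ 1`. -/
theorem telescoping_partition_function_bounds {C : Type*} [Countable C]
    (P : PolymerModel C) (hZfin : P.Z Set.univ ≠ ⊤)
    {m : ℕ} (Λ : Fin m → Set C)
    (hclique : ∀ i, P.IsClique (Λ i)) (hcover : (⋃ i, Λ i) = Set.univ)
    (U : ℕ → Set C) (hU0 : U 0 = ∅)
    (hUsucc : ∀ i : Fin m, U (↑i + 1) = U ↑i ∪ Λ i) :
    ∀ i : Fin m,
      (P.Z (U ↑i) ≤ P.Z (U (↑i + 1)) ∧ P.Z (U (↑i + 1)) ≤ P.Z (U ↑i) * P.Z (Λ i)) ∧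
        ((P.Z (Λ i))⁻¹ ≤ P.Z (U ↑i) / P.Z (U (↑i + 1)) ∧
          P.Z (U ↑i) / P.Z (U (↑i + 1)) ≤ 1) := by
  intro i
  have hle1 : P.Z (U ↑i) ≤ P.Z (U (↑i + 1)) := by
    rw [hUsucc i]; exact P.Z_mono Set.subset_union_left
  have hle2 : P.Z (U (↑i + 1)) ≤ P.Z (U ↑i) * P.Z (Λ i) := by
    rw [hUsucc i]; exact P.Z_union_le _ _
  have hΛ0 : P.Z (Λ i) ≠ 0 := P.Z_ne_zero _
  have hΛtop : P.Z (Λ i) ≠ ⊤ :=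
    fun h => hZfin (top_le_iff.mp (h ▸ P.Z_mono (Set.subset_univ _)))
  have hU0' : P.Z (U (↑i + 1)) ≠ 0 := P.Z_ne_zero _
  have hUtop : P.Z (U (↑i + 1)) ≠ ⊤ :=
    fun h => hZfin (top_le_iff.mp (h ▸ P.Z_mono (Set.subset_univ _)))
  refine ⟨⟨hle1, hle2⟩, ?_, ?_⟩
  · rw [ENNReal.le_div_iff_mul_le (Or.inl hU0') (Or.inl hUtop)]
    calc (P.Z (Λ i))⁻¹ * P.Z (U (↑i + 1))
        ≤ (P.Z (Λ i))⁻¹ * (P.Z (U ↑i) * P.Z (Λ i)) := by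
          exact mul_le_mul_right hle2 _
      _ = P.Z (U ↑i) * ((P.Z (Λ i))⁻¹ * P.Z (Λ i)) := by ring
      _ = P.Z (U ↑i) := by rw [ENNReal.inv_mul_cancel hΛ0 hΛtop, mul_one]
  · exact ENNReal.div_le_of_le_mul (by simpa using hle1)
end

section
/- Let m ∈ ℕ_{>0}, Z_max ∈ ℝ with Z_max ≥ 1, ε ∈ (0,1], and Z ∈ ℝ_{>0}. Let ρ_1, …, ρ_m ∈ [1/Z_max, 1] satisfy ∏_{i∈[m]} ρ_i = 1/Z. Let s be an integer with s ≥ 1 + 125·Z_max·m/ε², and on some probability space let (B_{i,j})_{i∈[m], j∈[s]} be mutually independent {0,1}-valued random variables such that for each i ∈ [m] there is p_i with E[B_{i,j}] = p_i for all j ∈ [s] and |p_i − ρ_i| ≤ ε/(5·Z_max·m). Define ρ̂_i = (1/s)∑_{j∈[s]} B_{i,j} and ρ̂ = ∏_{i∈[m]} ρ̂_i. Then with probability at least 3/4, ρ̂ > 0 and (1 − ε)·Z ≤ 1/ρ̂ ≤ (1 + ε)·Z. -/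
open MeasureTheory ProbabilityTheory
open scoped ENNReal


lemma my_integrable_of_bdd {Ω : Type*} [MeasurableSpace Ω] {μ : Measure Ω} [IsFiniteMeasure μ]
    {f : Ω → ℝ} (hf : Measurable f) (C : ℝ) (h : ∀ ω, |f ω| ≤ C) : Integrable f μ :=
  memLp_one_iff_integrable.mp (MemLp.of_bound hf.aestronglyMeasurable C
    (Filter.Eventually.of_forall (by simpa [Real.norm_eq_abs] using h)))

lemma my_pow_one_add_le (n : ℕ) (a : ℝ) (ha : 0 ≤ a) (h : 2*n*a ≤ 1) :
    (1+a)^n ≤ 1 + 2*n*a := by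
  induction n with
  | zero => simp
  | succ k ih =>
    have hk : 2*(k:ℝ)*a ≤ 1 := by
      refine le_trans ?_ h
      push_cast
      nlinarith
    have h1 := ih hk
    have h2 : (0:ℝ) ≤ (1+a)^k := by positivity
    have h3 : (1+a)^(k+1) = (1+a)^k * (1+a) := pow_succ _ _
    push_cast
    nlinarith

lemma my_indep_row_prod {Ω : Type*} [MeasurableSpace Ω] {μ : Measure Ω} {n s : ℕ}
    (B : Fin n × Fin s → Ω → ℝ) (hBmeas : ∀ q, Measurable (B q))
    (hindep : iIndepFun B μ)
    (φ : ℝ → ℝ) (hφ : Measurable φ) (a : Fin n) (t : Finset (Fin n)) (ha : a ∉ t) :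
    IndepFun (fun ω => φ ((s:ℝ)⁻¹ * ∑ j, B (a, j) ω))
      (fun ω => ∏ i ∈ t, φ ((s:ℝ)⁻¹ * ∑ j, B (i, j) ω)) μ := by
  classical
  set S : Finset (Fin n × Fin s) := {a} ×ˢ Finset.univ with hSdef
  set T : Finset (Fin n × Fin s) := t ×ˢ Finset.univ with hTdef
  have hdisj : Disjoint S T := by
    simp only [Finset.disjoint_left, hSdef, hTdef, Finset.mem_product, Finset.mem_singleton,
      Finset.mem_univ, and_true]
    rintro ⟨x, y⟩ hx ht
    exact ha (hx ▸ ht)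
  have h := hindep.indepFun_finset S T hdisj hBmeas
  have hmemS : ∀ j : Fin s, (a, j) ∈ S := by
    intro j; simp [hSdef, Finset.mem_product]
  have hmemT : ∀ (i : t) (j : Fin s), ((i : Fin n), j) ∈ T := by
    intro i j; simp [hTdef, Finset.mem_product]
  let gA : ((q : S) → ℝ) → ℝ := fun v => φ ((s:ℝ)⁻¹ * ∑ j, v ⟨(a, j), hmemS j⟩)
  let gT : ((q : T) → ℝ) → ℝ :=
    fun v => ∏ i ∈ t.attach, φ ((s:ℝ)⁻¹ * ∑ j, v ⟨((i : Fin n), j), hmemT i j⟩)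
  have hgA : Measurable gA := by
    apply hφ.comp
    exact measurable_const.mul (Finset.measurable_sum _ fun j _ => measurable_pi_apply _)
  have hgT : Measurable gT := by
    apply Finset.measurable_prod
    intro i _
    exact hφ.comp (measurable_const.mul
      (Finset.measurable_sum _ fun j _ => measurable_pi_apply _))
  have h2 := h.comp hgA hgT
  convert h2 using 1
  · rfl
  funext ω
  show ∏ i ∈ t, φ ((s:ℝ)⁻¹ * ∑ j, B (i, j) ω) = gT (fun q : T => B q ω)
  simp only [gT]
  rw [← Finset.prod_attach t (fun i => φ ((s:ℝ)⁻¹ * ∑ j, B (i, j) ω))]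

lemma my_integral_prod_rows {Ω : Type*} [MeasurableSpace Ω] {μ : Measure Ω}
    [IsProbabilityMeasure μ] {n s : ℕ}
    (B : Fin n × Fin s → Ω → ℝ) (hBmeas : ∀ q, Measurable (B q))
    (hindep : iIndepFun B μ)
    (φ : ℝ → ℝ) (hφ : Measurable φ) (t : Finset (Fin n)) :
    ∫ ω, ∏ i ∈ t, φ ((s:ℝ)⁻¹ * ∑ j, B (i, j) ω) ∂μ
      = ∏ i ∈ t, ∫ ω, φ ((s:ℝ)⁻¹ * ∑ j, B (i, j) ω) ∂μ := by
  classical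
  induction t using Finset.induction_on with
  | empty => simp
  | @insert a t ha ih =>
    have hmeas1 : Measurable (fun ω => φ ((s:ℝ)⁻¹ * ∑ j, B (a, j) ω)) :=
      hφ.comp (measurable_const.mul (Finset.measurable_sum _ fun j _ => hBmeas _))
    have hmeas2 : Measurable (fun ω => ∏ i ∈ t, φ ((s:ℝ)⁻¹ * ∑ j, B (i, j) ω)) :=
      Finset.measurable_prod _ fun i _ =>
        hφ.comp (measurable_const.mul (Finset.measurable_sum _ fun j _ => hBmeas _))
    have hind := my_indep_row_prod B hBmeas hindep φ hφ a t ha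
    simp only [Finset.prod_insert ha]
    rw [← ih]
    exact hind.integral_mul_eq_mul_integral hmeas1.aestronglyMeasurable hmeas2.aestronglyMeasurable

lemma my_arith1 (Zmax m ε : ℝ) (hZ : Zmax ≠ 0) (hm : m ≠ 0) :
    4/(5*Zmax) * (ε^2/(100*m)) = ε^2/(125*Zmax*m) := by field_simp; ring

lemma my_arith2 (m ε : ℝ) (hm : m ≠ 0) : 2*m*(ε^2/(100*m)) = ε^2/50 := by
  field_simp; ring

lemma my_arith3 (m ε : ℝ) (hm : m ≠ 0) : 2*m*(ε/(5*m)) = 2*ε/5 := by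
  field_simp

lemma my_arith4 (m ε : ℝ) (hm : m ≠ 0) : 1 + m*(-(ε/(5*m))) = 1 - ε/5 := by
  field_simp; ring

lemma my_arith5 (Z a b : ℝ) (hZ : Z ≠ 0) :
    a*Z*(b*Z⁻¹) = a*b := by field_simp

lemma my_final (ε Z P r : ℝ) (hε0 : 0 < ε) (hε1 : ε ≤ 1) (hZ : 0 < Z) (hP : 0 < P)
    (hPub : P ≤ (1+2*ε/5)*Z⁻¹) (hPlb : (1-ε/5)*Z⁻¹ ≤ P)
    (hlt : |r - P| < ε/3*P) :
    0 < r ∧ (1-ε)*Z ≤ r⁻¹ ∧ r⁻¹ ≤ (1+ε)*Z := by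
  have habs := abs_lt.mp hlt
  have hRlb : (1 - ε/3) * P ≤ r := by nlinarith [habs.1]
  have hRub : r ≤ (1 + ε/3) * P := by nlinarith [habs.2]
  have hrpos : 0 < r := lt_of_lt_of_le (by nlinarith) hRlb
  have hZinv : 0 < Z⁻¹ := by positivity
  refine ⟨hrpos, ?_, ?_⟩
  · rw [inv_eq_one_div, le_div_iff₀ hrpos]
    have hRub2 : r ≤ (1+ε/3)*((1+2*ε/5)*Z⁻¹) :=
      le_trans hRub (mul_le_mul_of_nonneg_left hPub (by linarith))
    have h1 : (1-ε)*Z*r ≤ (1-ε)*Z*((1+ε/3)*((1+2*ε/5)*Z⁻¹)) :=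
      mul_le_mul_of_nonneg_left hRub2 (mul_nonneg (by linarith) hZ.le)
    have h2 : (1-ε)*Z*((1+ε/3)*((1+2*ε/5)*Z⁻¹)) = (1-ε)*(1+ε/3)*(1+2*ε/5) := by
      rw [show (1-ε)*Z*((1+ε/3)*((1+2*ε/5)*Z⁻¹)) = ((1-ε)*(1+ε/3))*Z*((1+2*ε/5)*Z⁻¹) by ring,
        my_arith5 Z _ _ (ne_of_gt hZ)]
    have h3 : (1-ε)*(1+ε/3)*(1+2*ε/5) ≤ 1 := by
      nlinarith [hε0.le, mul_nonneg hε0.le hε0.le,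
        mul_nonneg (mul_nonneg hε0.le hε0.le) hε0.le]
    linarith
  · rw [inv_eq_one_div, div_le_iff₀ hrpos]
    have hRlb2 : (1-ε/3)*((1-ε/5)*Z⁻¹) ≤ r :=
      le_trans (mul_le_mul_of_nonneg_left hPlb (by linarith)) hRlb
    have h1 : (1+ε)*Z*((1-ε/3)*((1-ε/5)*Z⁻¹)) ≤ (1+ε)*Z*r :=
      mul_le_mul_of_nonneg_left hRlb2 (mul_nonneg (by linarith) hZ.le)
    have h2 : (1+ε)*Z*((1-ε/3)*((1-ε/5)*Z⁻¹)) = (1+ε)*(1-ε/3)*(1-ε/5) := by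
      rw [show (1+ε)*Z*((1-ε/3)*((1-ε/5)*Z⁻¹)) = ((1+ε)*(1-ε/3))*Z*((1-ε/5)*Z⁻¹) by ring,
        my_arith5 Z _ _ (ne_of_gt hZ)]
    have h3 : 1 ≤ (1+ε)*(1-ε/3)*(1-ε/5) := by
      nlinarith [mul_nonneg hε0.le (by linarith : (0:ℝ) ≤ 1-ε),
        mul_nonneg (mul_nonneg hε0.le hε0.le) hε0.le]
    linarith

set_option maxHeartbeats 1000000

/-- (Analysis of the simulated-annealing estimator.) Given
`ρ_1, …, ρ_m ∈ [1/Z_max, 1]` with `∏ ρ_i = 1/Z`, and mutually independent `{0,1}`-valued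
samples `B_{i,j}`, `j ∈ [s]`, with means `p_i` that are `ε/(5 Z_max m)`-close to `ρ_i`,
where `s ≥ 1 + 125 Z_max m/ε²`, the inverse of the product of the empirical means
`ρ̂_i = (1/s) ∑_j B_{i,j}` is a multiplicative `ε`-approximation of `Z` with probability
at least `3/4`. -/
theorem annealing_estimator
    {Ω : Type*} [MeasurableSpace Ω] (μ : Measure Ω) [IsProbabilityMeasure μ]
    (m : ℕ) (hm : 0 < m) (Zmax : ℝ) (hZmax : 1 ≤ Zmax)
    (ε : ℝ) (hε : ε ∈ Set.Ioc (0 : ℝ) 1) (Z : ℝ) (hZ : 0 < Z)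
    (ρ : Fin m → ℝ) (hρ : ∀ i, ρ i ∈ Set.Icc Zmax⁻¹ 1)
    (hρprod : ∏ i, ρ i = Z⁻¹)
    (s : ℕ) (hs : 1 + 125 * Zmax * m / ε ^ 2 ≤ (s : ℝ))
    (B : Fin m × Fin s → Ω → ℝ)
    (hBmeas : ∀ p, Measurable (B p))
    (hB01 : ∀ p ω, B p ω = 0 ∨ B p ω = 1)
    (hindep : ProbabilityTheory.iIndepFun B μ)
    (p : Fin m → ℝ)
    (hmean : ∀ i j, ∫ ω, B (i, j) ω ∂μ = p i)
    (hclose : ∀ i, |p i - ρ i| ≤ ε / (5 * Zmax * m)) :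
    (3 / 4 : ℝ≥0∞) ≤
      μ {ω | 0 < ∏ i, (s : ℝ)⁻¹ * ∑ j, B (i, j) ω ∧
        (1 - ε) * Z ≤ (∏ i, (s : ℝ)⁻¹ * ∑ j, B (i, j) ω)⁻¹ ∧
        (∏ i, (s : ℝ)⁻¹ * ∑ j, B (i, j) ω)⁻¹ ≤ (1 + ε) * Z} := by
  classical
  have hZne : Zmax ≠ 0 := by positivity
  have hmne : (m:ℝ) ≠ 0 := by exact_mod_cast hm.ne'
  obtain ⟨hε0, hε1⟩ := hε
  have hZmax0 : (0:ℝ) < Zmax := lt_of_lt_of_le one_pos hZmax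
  have hm1 : (1:ℝ) ≤ m := by exact_mod_cast hm
  have hm0 : (0:ℝ) < m := by linarith
  have haux : 0 < 125 * Zmax * m / ε ^ 2 := by positivity
  have hs1 : (1:ℝ) ≤ s := by linarith
  have hs0 : (0:ℝ) < s := by linarith
  have hsne : (s:ℝ) ≠ 0 := ne_of_gt hs0
  have hs2 : 125 * Zmax * m / ε ^ 2 ≤ (s:ℝ) := by linarith
  have hB0 : ∀ q ω, 0 ≤ B q ω := by intro q ω; rcases hB01 q ω with h|h <;> simp [h]
  have hB1 : ∀ q ω, B q ω ≤ 1 := by intro q ω; rcases hB01 q ω with h|h <;> simp [h]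
  have hBint : ∀ q, Integrable (B q) μ := fun q => by
    refine memLp_one_iff_integrable.mp (MemLp.of_bound (hBmeas q).aestronglyMeasurable 1
      (Filter.Eventually.of_forall fun ω => ?_))
    rw [Real.norm_eq_abs, abs_le]
    exact ⟨by linarith [hB0 q ω], hB1 q ω⟩
  set X : Fin m → Ω → ℝ := fun i ω => (s:ℝ)⁻¹ * ∑ j, B (i, j) ω with hXdef
  set R : Ω → ℝ := fun ω => ∏ i, X i ω with hRdef
  show (3/4 : ℝ≥0∞) ≤ μ {ω | 0 < R ω ∧ (1-ε)*Z ≤ (R ω)⁻¹ ∧ (R ω)⁻¹ ≤ (1+ε)*Z}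
  have hXmeas : ∀ i, Measurable (X i) := fun i =>
    measurable_const.mul (Finset.measurable_sum _ fun j _ => hBmeas _)
  have hX0 : ∀ i ω, 0 ≤ X i ω := fun i ω =>
    mul_nonneg (by positivity) (Finset.sum_nonneg fun j _ => hB0 _ ω)
  have hX1 : ∀ i ω, X i ω ≤ 1 := by
    intro i ω
    have h : ∑ j, B (i,j) ω ≤ (s:ℝ) := by
      calc ∑ j : Fin s, B (i,j) ω ≤ ∑ _j : Fin s, (1:ℝ) :=
            Finset.sum_le_sum fun j _ => hB1 _ ω
        _ = s := by simp
    calc X i ω ≤ (s:ℝ)⁻¹ * s := mul_le_mul_of_nonneg_left h (by positivity)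
      _ = 1 := inv_mul_cancel₀ hsne
  have hRmeas : Measurable R := Finset.measurable_prod _ fun i _ => hXmeas i
  have hR0 : ∀ ω, 0 ≤ R ω := fun ω => Finset.prod_nonneg fun i _ => hX0 i ω
  have hR1 : ∀ ω, R ω ≤ 1 := fun ω =>
    Finset.prod_le_one (fun i _ => hX0 i ω) (fun i _ => hX1 i ω)
  -- expectations of the row averages
  have hEX : ∀ i, ∫ ω, X i ω ∂μ = p i := by
    intro i
    show ∫ ω, (s:ℝ)⁻¹ * ∑ j, B (i, j) ω ∂μ = p i
    rw [integral_const_mul, integral_finset_sum _ (fun j _ => hBint (i,j))]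
    simp only [hmean i]
    rw [Finset.sum_const, Finset.card_univ, Fintype.card_fin, nsmul_eq_mul]
    field_simp
  have hEX2 : ∀ i, ∫ ω, (X i ω)^2 ∂μ = p i ^ 2 + (p i - p i ^ 2)/s := by
    intro i
    have hsq : ∀ ω, (X i ω)^2 = (s:ℝ)⁻¹^2 * ∑ j, ∑ k, B (i,j) ω * B (i,k) ω := by
      intro ω
      show ((s:ℝ)⁻¹ * ∑ j, B (i, j) ω)^2 = _
      rw [mul_pow, sq (∑ j, B (i,j) ω), Finset.sum_mul_sum]
    have hBBint : ∀ (j k : Fin s), Integrable (fun ω => B (i,j) ω * B (i,k) ω) μ := by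
      intro j k
      refine memLp_one_iff_integrable.mp (MemLp.of_bound
        ((hBmeas _).mul (hBmeas _)).aestronglyMeasurable 1
        (Filter.Eventually.of_forall fun ω => ?_))
      rw [Real.norm_eq_abs, abs_le]
      constructor
      · nlinarith [hB0 (i,j) ω, hB0 (i,k) ω]
      · nlinarith [hB0 (i,j) ω, hB0 (i,k) ω, hB1 (i,j) ω, hB1 (i,k) ω]
    have hBB : ∀ j k : Fin s, ∫ ω, B (i,j) ω * B (i,k) ω ∂μ
        = p i ^ 2 + (if j = k then p i - p i ^ 2 else 0) := by
      intro j k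
      by_cases hjk : j = k
      · subst hjk
        have heq : (fun ω => B (i,j) ω * B (i,j) ω) = B (i,j) := by
          funext ω; rcases hB01 (i,j) ω with h|h <;> simp [h]
        rw [heq, hmean i j, if_pos rfl]
        ring
      · have hne : ((i,j) : Fin m × Fin s) ≠ (i,k) := by simp [Prod.ext_iff, hjk]
        have hind : IndepFun (B (i,j)) (B (i,k)) μ := hindep.indepFun hne
        have hint := hind.integral_mul_eq_mul_integral (hBmeas _).aestronglyMeasurable
          (hBmeas _).aestronglyMeasurable
        rw [show (∫ ω, B (i,j) ω * B (i,k) ω ∂μ) = ∫ ω, (B (i,j) * B (i,k)) ω ∂μ from rfl,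
          hint, hmean i j, hmean i k, if_neg hjk]
        ring
    simp only [hsq]
    rw [integral_const_mul,
      integral_finset_sum _ (fun j _ => integrable_finset_sum _ (fun k _ => hBBint j k))]
    have hinner : ∀ j : Fin s, ∫ ω, ∑ k, B (i,j) ω * B (i,k) ω ∂μ
        = ∑ k, ∫ ω, B (i,j) ω * B (i,k) ω ∂μ :=
      fun j => integral_finset_sum _ (fun k _ => hBBint j k)
    simp only [hinner, hBB, Finset.sum_add_distrib, Finset.sum_const, Finset.card_univ,
      Fintype.card_fin, nsmul_eq_mul, Finset.sum_ite_eq, Finset.mem_univ, if_true]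
    field_simp
  -- bounds on p
  have hρ1 : ∀ i, Zmax⁻¹ ≤ ρ i := fun i => (hρ i).1
  have hρ2 : ∀ i, ρ i ≤ 1 := fun i => (hρ i).2
  have hρpos : ∀ i, 0 < ρ i := fun i => lt_of_lt_of_le (by positivity) (hρ1 i)
  have hεm : ε/(5*m) ≤ 1/5 := by
    rw [div_le_iff₀ (by positivity)]
    nlinarith
  have hclose' : ∀ i, ε/(5*Zmax*m) ≤ ρ i * (ε/(5*m)) := by
    intro i
    have he : ε/(5*Zmax*m) = Zmax⁻¹ * (ε/(5*m)) := by
      rw [inv_mul_eq_div, div_div]; congr 1; ring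
    rw [he]
    exact mul_le_mul_of_nonneg_right (hρ1 i) (by positivity)
  have hplb : ∀ i, ρ i * (1 - ε/(5*m)) ≤ p i := by
    intro i
    have h := (abs_le.mp (hclose i)).1
    have h2 := hclose' i
    nlinarith [hρpos i]
  have hpub : ∀ i, p i ≤ ρ i * (1 + ε/(5*m)) := by
    intro i
    have h := (abs_le.mp (hclose i)).2
    have h2 := hclose' i
    nlinarith [hρpos i]
  have hp_lb : ∀ i, 4/(5*Zmax) ≤ p i := by
    intro i
    have h1 := hplb i
    have h3 : Zmax⁻¹ * (4/5) ≤ ρ i * (1 - ε/(5*m)) := by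
      apply mul_le_mul (hρ1 i) (by linarith) (by norm_num) (hρpos i).le
    have h4 : Zmax⁻¹ * (4/5) = 4/(5*Zmax) := by field_simp
    linarith
  have hp_pos : ∀ i, 0 < p i := fun i => lt_of_lt_of_le (by positivity) (hp_lb i)
  set P : ℝ := ∏ i, p i with hPdef
  have hP_pos : 0 < P := by rw [hPdef]; exact Finset.prod_pos (fun i _ => hp_pos i)
  clear_value P
  -- expectation and second moment of R
  have hER : ∫ ω, R ω ∂μ = P := by
    have h := my_integral_prod_rows B hBmeas hindep (fun x => x) measurable_id Finset.univ
    rw [show (∫ ω, R ω ∂μ)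
        = ∫ ω, ∏ i, (fun x : ℝ => x) ((s:ℝ)⁻¹ * ∑ j, B (i,j) ω) ∂μ from rfl, h, hPdef]
    exact Finset.prod_congr rfl fun i _ => hEX i
  have hER2 : ∫ ω, (R ω)^2 ∂μ = ∏ i, (p i ^ 2 + (p i - p i ^ 2)/s) := by
    have h := my_integral_prod_rows B hBmeas hindep (fun x => x^2)
      (measurable_id.pow_const 2) Finset.univ
    have hpt : ∀ ω, (R ω)^2 = ∏ i, (fun x : ℝ => x^2) ((s:ℝ)⁻¹ * ∑ j, B (i,j) ω) := by
      intro ω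
      show (∏ i, X i ω)^2 = ∏ i, (X i ω)^2
      rw [← Finset.prod_pow]
    simp only [hpt]
    rw [h]
    exact Finset.prod_congr rfl fun i _ => hEX2 i
  have hMem : MemLp R 2 μ := MemLp.of_bound hRmeas.aestronglyMeasurable 1
    (Filter.Eventually.of_forall fun ω => by
      rw [Real.norm_eq_abs, abs_le]; exact ⟨by linarith [hR0 ω], hR1 ω⟩)
  clear_value X R
  -- variance bound
  have hinv_s : (s:ℝ)⁻¹ ≤ ε^2/(125*Zmax*m) := by
    have h := inv_anti₀ haux hs2
    rwa [inv_div] at h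
  have hvar : variance R μ ≤ P^2 * (ε^2/50) := by
    have hvdef := variance_eq_sub hMem
    have hR2int : μ[R ^ 2] = ∏ i, (p i ^ 2 + (p i - p i ^ 2)/s) := hER2
    have hR1int : μ[R] = P := hER
    have hfac : ∀ i, p i^2 + (p i - p i^2)/s ≤ p i^2 * (1 + ε^2/(100*m)) := by
      intro i
      have h1 : (p i - p i^2)/s ≤ p i * (s:ℝ)⁻¹ := by
        rw [div_eq_mul_inv]
        exact mul_le_mul_of_nonneg_right (by nlinarith [hp_pos i]) (by positivity)
      have h2 : p i * (s:ℝ)⁻¹ ≤ p i * (ε^2/(125*Zmax*m)) :=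
        mul_le_mul_of_nonneg_left hinv_s (hp_pos i).le
      have h3 : ε^2/(125*Zmax*m) ≤ p i * (ε^2/(100*m)) := by
        have he := my_arith1 Zmax m ε hZne hmne
        rw [← he]
        exact mul_le_mul_of_nonneg_right (hp_lb i) (by positivity)
      have h4 := mul_le_mul_of_nonneg_left h3 (hp_pos i).le
      calc p i^2 + (p i - p i^2)/s ≤ p i^2 + p i * (s:ℝ)⁻¹ := add_le_add_right h1 _
        _ ≤ p i^2 + p i * (ε^2/(125*Zmax*m)) := add_le_add_right h2 _
        _ ≤ p i^2 + p i * (p i * (ε^2/(100*m))) := add_le_add_right h4 _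
        _ = p i^2 * (1 + ε^2/(100*m)) := by ring
    have hfac0 : ∀ i, 0 ≤ p i^2 + (p i - p i^2)/s := by
      intro i
      have hsi0 : 0 < (s:ℝ)⁻¹ := by positivity
      have hsi1 : (s:ℝ)⁻¹ ≤ 1 := by
        rw [inv_le_one_iff₀]; right; exact hs1
      rw [div_eq_mul_inv]
      nlinarith [hp_pos i, sq_nonneg (p i)]
    have hprod_le : ∏ i, (p i^2 + (p i - p i^2)/s) ≤ ∏ i, (p i^2 * (1 + ε^2/(100*m))) :=
      Finset.prod_le_prod (fun i _ => hfac0 i) (fun i _ => hfac i)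
    have hprodsplit : ∏ i, (p i^2 * (1 + ε^2/(100*m))) = P^2 * (1 + ε^2/(100*m))^m := by
      rw [hPdef, Finset.prod_mul_distrib, Finset.prod_pow, Finset.prod_const, Finset.card_univ,
        Fintype.card_fin]
    have hma := my_arith2 (m:ℝ) ε hmne
    have hpow_le : (1 + ε^2/(100*m))^m ≤ 1 + ε^2/50 := by
      have h := my_pow_one_add_le m (ε^2/(100*m)) (by positivity) (by rw [hma]; nlinarith)
      rwa [hma] at h
    calc variance R μ = ∏ i, (p i ^ 2 + (p i - p i ^ 2)/s) - P^2 := by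
          rw [hvdef, hR2int, hR1int]
      _ ≤ P^2 * (1 + ε^2/(100*m))^m - P^2 := by rw [← hprodsplit]; linarith
      _ ≤ P^2 * (1 + ε^2/50) - P^2 := by nlinarith [sq_nonneg P]
      _ = P^2 * (ε^2/50) := by ring
  -- bounds on P
  have hconst : ∀ c : ℝ, ∏ _i : Fin m, c = c^m := by
    intro c; rw [Finset.prod_const, Finset.card_univ, Fintype.card_fin]
  have hZinv : (0:ℝ) < Z⁻¹ := by positivity
  have hPub : P ≤ (1 + 2*ε/5) * Z⁻¹ := by
    have h1 : P ≤ ∏ i, (ρ i * (1 + ε/(5*m))) := by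
      rw [hPdef]
      exact Finset.prod_le_prod (fun i _ => (hp_pos i).le) (fun i _ => hpub i)
    have h2 : ∏ i, (ρ i * (1 + ε/(5*m))) = Z⁻¹ * (1 + ε/(5*m))^m := by
      rw [Finset.prod_mul_distrib, hρprod, hconst]
    have hma := my_arith3 (m:ℝ) ε hmne
    have h3 : (1 + ε/(5*m))^m ≤ 1 + 2*ε/5 := by
      have h := my_pow_one_add_le m (ε/(5*m)) (by positivity) (by rw [hma]; linarith)
      rwa [hma] at h
    calc P ≤ Z⁻¹ * (1 + ε/(5*m))^m := by rw [← h2]; exact h1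
      _ ≤ Z⁻¹ * (1 + 2*ε/5) := by nlinarith
      _ = (1 + 2*ε/5) * Z⁻¹ := by ring
  have hPlb : (1 - ε/5) * Z⁻¹ ≤ P := by
    have h1 : ∏ i, (ρ i * (1 - ε/(5*m))) ≤ P := by
      rw [hPdef]
      exact Finset.prod_le_prod (fun i _ => mul_nonneg (hρpos i).le (by linarith)) (fun i _ => hplb i)
    have h2 : ∏ i, (ρ i * (1 - ε/(5*m))) = Z⁻¹ * (1 - ε/(5*m))^m := by
      rw [Finset.prod_mul_distrib, hρprod, hconst]
    have h3 : 1 - ε/5 ≤ (1 - ε/(5*m))^m := by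
      have hb := one_add_mul_le_pow (a := -(ε/(5*m))) (by nlinarith) m
      have hmm := my_arith4 (m:ℝ) ε hmne
      rw [hmm] at hb
      calc 1 - ε/5 ≤ (1 + -(ε/(5*m)))^m := hb
        _ = (1 - ε/(5*m))^m := by ring_nf
    calc (1-ε/5)*Z⁻¹ = Z⁻¹*(1-ε/5) := by ring
      _ ≤ Z⁻¹*(1-ε/(5*m))^m := by nlinarith
      _ = ∏ i, (ρ i * (1 - ε/(5*m))) := h2.symm
      _ ≤ P := h1
  -- Chebyshev
  set c : ℝ := ε/3 * P with hcdef
  have hc_pos : 0 < c := by rw [hcdef]; exact mul_pos (by linarith) hP_pos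
  clear_value c
  have hcheb := meas_ge_le_variance_div_sq (μ := μ) hMem hc_pos
  have hfrac : variance R μ / c^2 ≤ 9/50 := by
    rw [div_le_iff₀ (by positivity)]
    have hc2 : c^2 = ε^2/9 * P^2 := by rw [hcdef]; ring
    nlinarith [sq_nonneg P]
  have hbound : μ {ω | c ≤ |R ω - μ[R]|} ≤ ENNReal.ofReal (9/50) :=
    le_trans hcheb (ENNReal.ofReal_le_ofReal hfrac)
  have hbadmeas : MeasurableSet {ω | c ≤ |R ω - μ[R]|} :=
    measurableSet_le measurable_const ((hRmeas.sub measurable_const).abs)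
  have hsub : {ω | c ≤ |R ω - μ[R]|}ᶜ ⊆
      {ω | 0 < R ω ∧ (1-ε)*Z ≤ (R ω)⁻¹ ∧ (R ω)⁻¹ ≤ (1+ε)*Z} := by
    intro ω hω
    simp only [Set.mem_compl_iff, Set.mem_setOf_eq, not_le] at hω
    rw [show μ[R] = P from hER, hcdef] at hω
    exact my_final ε Z P (R ω) hε0 hε1 hZ hP_pos hPub hPlb hω
  have h14 : μ {ω | c ≤ |R ω - μ[R]|} ≤ 1/4 := by
    refine le_trans hbound ?_
    rw [show (1/4 : ℝ≥0∞) = ENNReal.ofReal (1/4) by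
      rw [ENNReal.ofReal_div_of_pos (by norm_num)]; norm_num]
    exact ENNReal.ofReal_le_ofReal (by norm_num)
  have hfinal : (3/4 : ℝ≥0∞) ≤ μ ({ω | c ≤ |R ω - μ[R]|}ᶜ) := by
    rw [prob_compl_eq_one_sub hbadmeas]
    refine ENNReal.le_sub_of_add_le_left (ne_top_of_le_ne_top (by norm_num) h14) ?_
    calc μ {ω | c ≤ |R ω - μ[R]|} + 3/4 ≤ 1/4 + 3/4 := add_le_add_left h14 _
      _ = 1 := by
        rw [ENNReal.div_add_div_same, show (1:ℝ≥0∞)+3 = 4 by norm_num]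
        exact ENNReal.div_self (by norm_num) (by norm_num)
  exact le_trans hfinal (measure_mono hsub)
end
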